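/- arXiv:1004.5193 — 4 statements merged into one kernel-verified Lean document; each statement's English description precedes it below -/
import Mathlib

section
/- For all parameters a > 0, b > 0, λ ∈ (0,2) and every time t > 0, the kernel K(t,·) defined by K(t,x) = ∫_ℝ e^{2πixξ} e^{−t·ψ(ξ)} dξ belongs to L¹(ℝ). -/
open MeasureTheory Real

noncomputable section

/-- The Fourier symbol `ψ(ξ) = 4π²aξ² − b|ξ|^λ`. -/
def psi (a b lam ξ : ℝ) : ℝ := 4 * π ^ 2 * a * ξ ^ 2 - b * |ξ| ^ lam

/-- The kernel `K(t,x) = ∫_ℝ e^{2πixξ} e^{−tψ(ξ)} dξ`. -/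
def K (a b lam t x : ℝ) : ℂ :=
  ∫ ξ : ℝ, Complex.exp (2 * ↑π * Complex.I * ↑x * ↑ξ) * Complex.exp (-↑(t * psi a b lam ξ))

set_option maxHeartbeats 1000000
open MeasureTheory Real NNReal
noncomputable section

/-- auxiliary: the symbol exponential -/
def gaux (α β μ : ℝ) (ξ : ℝ) : ℝ := Real.exp (β * |ξ| ^ μ - α * ξ ^ 2)

def g1aux (α β μ : ℝ) (η : ℝ) : ℝ :=
  (β * μ * η ^ (μ - 1) - 2 * α * η) * gaux α β μ η

def g2aux (α β μ : ℝ) (η : ℝ) : ℝ :=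
  (β * μ * (μ - 1) * η ^ (μ - 2) - 2 * α
    + (β * μ * η ^ (μ - 1) - 2 * α * η) ^ 2) * gaux α β μ η

lemma gaux_pos (α β μ ξ : ℝ) : 0 < gaux α β μ ξ := Real.exp_pos _

lemma gaux_neg_arg (α β μ ξ : ℝ) : gaux α β μ (-ξ) = gaux α β μ ξ := by
  simp [gaux]

lemma gaux_cont (α β : ℝ) {μ : ℝ} (hμ0 : 0 < μ) : Continuous (gaux α β μ) := by
  apply Real.continuous_exp.comp
  exact (continuous_const.mul (continuous_abs.rpow_const (fun x => Or.inr hμ0.le))).sub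
    (continuous_const.mul (continuous_pow 2))

/-- the constant in the gaussian domination -/
def C0aux (α β μ : ℝ) : ℝ :=
  Real.exp (β * (max 1 ((2 * β / α) ^ ((1:ℝ) / (2 - μ)))) ^ μ)

lemma C0aux_pos (α β μ : ℝ) : 0 < C0aux α β μ := Real.exp_pos _

lemma gaux_le {α β μ : ℝ} (hα : 0 < α) (hβ : 0 < β) (hμ0 : 0 < μ) (hμ2 : μ < 2)
    (ξ : ℝ) : gaux α β μ ξ ≤ C0aux α β μ * Real.exp (-(α/2) * ξ ^ 2) := by
  set S : ℝ := (2 * β / α) ^ ((1:ℝ) / (2 - μ)) with hS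
  set R : ℝ := max 1 S with hR
  have hSpos : 0 < S := Real.rpow_pos_of_pos (by positivity) _
  have hkey : β * |ξ| ^ μ ≤ α/2 * ξ ^ 2 + β * R ^ μ := by
    rcases le_total |ξ| R with h | h
    · have : |ξ| ^ μ ≤ R ^ μ := Real.rpow_le_rpow (abs_nonneg _) h hμ0.le
      nlinarith [sq_nonneg ξ, hβ.le, mul_le_mul_of_nonneg_left this hβ.le]
    · have hξpos : 0 < |ξ| := lt_of_lt_of_le (lt_of_lt_of_le one_pos (le_max_left 1 S)) h
      have h1 : |ξ| ^ μ = |ξ| ^ (μ - 2) * ξ ^ 2 := by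
        rw [← sq_abs ξ, ← Real.rpow_natCast |ξ| 2, ← Real.rpow_add hξpos]
        norm_num
      have h2 : |ξ| ^ (μ - 2) ≤ S ^ (μ - 2) :=
        Real.rpow_le_rpow_of_nonpos hSpos (le_trans (le_max_right 1 S) h) (by linarith)
      have h3 : S ^ (μ - 2) = α / (2 * β) := by
        rw [hS, ← Real.rpow_mul (by positivity)]
        have : (1:ℝ) / (2 - μ) * (μ - 2) = -1 := by
          have h2μ : (2:ℝ) - μ ≠ 0 := by linarith
          field_simp
          ring
        rw [this, Real.rpow_neg_one]
        rw [inv_div]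
      have h4 : |ξ| ^ (μ - 2) * ξ ^ 2 ≤ (α / (2*β)) * ξ ^ 2 := by
        apply mul_le_mul_of_nonneg_right _ (sq_nonneg ξ)
        rw [← h3]; exact h2
      have h5 : β * |ξ| ^ μ ≤ β * ((α / (2*β)) * ξ^2) := by
        rw [h1]; exact mul_le_mul_of_nonneg_left h4 hβ.le
      have h6 : β * ((α / (2*β)) * ξ^2) = α/2 * ξ^2 := by field_simp
      have h7 : 0 ≤ β * R ^ μ := by positivity
      linarith
  have : gaux α β μ ξ ≤ Real.exp (β * R ^ μ + (-(α/2) * ξ^2)) := by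
    apply Real.exp_le_exp.mpr; simp only [hR, hS] at hkey ⊢; linarith
  rw [Real.exp_add] at this
  exact this

lemma gaux_integrable {α β μ : ℝ} (hα : 0 < α) (hβ : 0 < β) (hμ0 : 0 < μ) (hμ2 : μ < 2) :
    Integrable (gaux α β μ) := by
  apply Integrable.mono' ((integrable_exp_neg_mul_sq (show (0:ℝ) < α/2 by linarith)).const_mul
    (C0aux α β μ)) (gaux_cont α β hμ0).aestronglyMeasurable
  filter_upwards with ξ
  rw [Real.norm_eq_abs, abs_of_pos (gaux_pos _ _ _ _)]
  simpa using gaux_le hα hβ hμ0 hμ2 ξ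

lemma rpow_subadd {x y p : ℝ} (hx : 0 ≤ x) (hy : 0 ≤ y) (hp : 0 ≤ p) (hp1 : p ≤ 1) :
    (x + y) ^ p ≤ x ^ p + y ^ p := by
  have := NNReal.rpow_add_le_add_rpow x.toNNReal y.toNNReal hp hp1
  have h1 : ((x.toNNReal + y.toNNReal : ℝ≥0) : ℝ) = x + y := by
    simp [Real.coe_toNNReal _ hx, Real.coe_toNNReal _ hy]
  calc (x + y) ^ p = ((x.toNNReal + y.toNNReal : ℝ≥0) : ℝ) ^ p := by rw [h1]
    _ = (((x.toNNReal + y.toNNReal) ^ p : ℝ≥0) : ℝ) := by rw [NNReal.coe_rpow]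
    _ ≤ ((x.toNNReal ^ p + y.toNNReal ^ p : ℝ≥0) : ℝ) := by exact_mod_cast this
    _ = x ^ p + y ^ p := by
        push_cast [NNReal.coe_rpow, Real.coe_toNNReal _ hx, Real.coe_toNNReal _ hy]
        ring

lemma abs_rpow_sub_le {s r p : ℝ} (hp : 0 < p) (hp1 : p ≤ 1) :
    |(|s| ^ p - |r| ^ p)| ≤ |s - r| ^ p := by
  have key : ∀ u v : ℝ, |u| ^ p - |v| ^ p ≤ |u - v| ^ p := by
    intro u v
    have h1 : |u| ≤ |v| + |u - v| := by
      have := abs_sub_abs_le_abs_sub u v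
      linarith
    have h2 : |u| ^ p ≤ (|v| + |u - v|) ^ p :=
      Real.rpow_le_rpow (abs_nonneg _) h1 hp.le
    have h3 := rpow_subadd (abs_nonneg v) (abs_nonneg (u - v)) hp.le hp1
    linarith
  rw [abs_sub_le_iff]
  refine ⟨key s r, ?_⟩
  have := key r s
  rwa [abs_sub_comm] at this

lemma abs_rpow_mu_sub_le {s r μ : ℝ} (hμ0 : 0 < μ) (hμ2 : μ < 2) :
    |(|s| ^ μ - |r| ^ μ)| ≤ |s - r| ^ (μ/2) * (|s| ^ (μ/2) + |r| ^ (μ/2)) := by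
  set p := μ/2 with hp
  have hp0 : 0 < p := by positivity
  have hp1 : p ≤ 1 := by rw [hp]; linarith
  have hs : |s| ^ μ = (|s| ^ p) ^ 2 := by
    rw [← Real.rpow_natCast (|s| ^ p) 2, ← Real.rpow_mul (abs_nonneg s)]
    norm_num [hp]
  have hr : |r| ^ μ = (|r| ^ p) ^ 2 := by
    rw [← Real.rpow_natCast (|r| ^ p) 2, ← Real.rpow_mul (abs_nonneg r)]
    norm_num [hp]
  rw [hs, hr]
  have hfact : (|s| ^ p) ^ 2 - (|r| ^ p) ^ 2
      = (|s| ^ p - |r| ^ p) * (|s| ^ p + |r| ^ p) := by ring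
  rw [hfact, abs_mul]
  apply mul_le_mul (abs_rpow_sub_le hp0 hp1) _ (abs_nonneg _)
      (Real.rpow_nonneg (abs_nonneg _) _)
  rw [abs_of_nonneg (by positivity)]

lemma abs_exp_sub_exp_le (u v : ℝ) :
    |Real.exp u - Real.exp v| ≤ (Real.exp u + Real.exp v) * |u - v| := by
  wlog h : v ≤ u with H
  · have := H v u (by linarith)
    rwa [abs_sub_comm, abs_sub_comm v u, add_comm] at this
  rw [abs_of_nonneg (sub_nonneg.mpr (Real.exp_le_exp.mpr h)),
    abs_of_nonneg (sub_nonneg.mpr h)]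
  have e1 : Real.exp v = Real.exp (v - u) * Real.exp u := by
    rw [← Real.exp_add]; ring_nf
  nlinarith [Real.add_one_le_exp (v - u), Real.exp_pos u, Real.exp_pos v]

lemma hasDerivAt_gaux {α β μ : ℝ} {η : ℝ} (hη : 0 < η) :
    HasDerivAt (gaux α β μ) (g1aux α β μ η) η := by
  have h1 : HasDerivAt (fun s : ℝ => β * s ^ μ - α * s ^ 2)
      (β * (μ * η ^ (μ - 1)) - α * (2 * η)) η := by
    have hp := (Real.hasDerivAt_rpow_const (x := η) (p := μ) (Or.inl hη.ne')).const_mul β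
    have hq := (hasDerivAt_pow 2 η).const_mul α
    have h := hp.sub hq
    simp at h
    exact h
  have h2 := h1.exp
  have heq : gaux α β μ =ᶠ[nhds η] fun s => Real.exp (β * s ^ μ - α * s ^ 2) := by
    filter_upwards [Ioi_mem_nhds hη] with s hs
    simp [gaux, abs_of_pos (show (0:ℝ) < s from hs)]
  have h3 := h2.congr_of_eventuallyEq heq
  refine h3.congr_deriv ?_
  simp [g1aux, gaux, abs_of_pos hη]
  ring

lemma hasDerivAt_g1aux {α β μ : ℝ} {η : ℝ} (hη : 0 < η) :
    HasDerivAt (g1aux α β μ) (g2aux α β μ η) η := by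
  have hp : HasDerivAt (fun s : ℝ => β * μ * s ^ (μ - 1) - 2 * α * s)
      (β * μ * ((μ - 1) * η ^ (μ - 1 - 1)) - 2 * α) η := by
    have h1 := (Real.hasDerivAt_rpow_const (x := η) (p := μ - 1)
      (Or.inl hη.ne')).const_mul (β * μ)
    have h2 := (hasDerivAt_id η).const_mul (2 * α)
    have h := h1.sub h2
    simp at h
    exact h
  have h3 := hp.mul (hasDerivAt_gaux (α := α) (β := β) (μ := μ) hη)
  refine h3.congr_deriv ?_
  simp only [g2aux, g1aux]
  have : μ - 1 - 1 = μ - 2 := by ring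
  rw [this] at *
  ring
lemma far_pointwise {α β μ : ℝ} {δ ξ : ℝ} (hδ0 : 0 < δ) (hξ : 2 * δ ≤ ξ) :
    ∃ c : ℝ, ξ / 2 ≤ c ∧ c ≤ 2 * ξ ∧
      |gaux α β μ (ξ + δ) - 2 * gaux α β μ ξ + gaux α β μ (ξ - δ)|
        ≤ 2 * δ ^ 2 * |g2aux α β μ c| := by
  have hξ0 : 0 < ξ := by linarith
  have ha : 0 < ξ - δ := by linarith
  have hcont : ContinuousOn (gaux α β μ) (Set.Icc ξ (ξ + δ)) :=
    fun s hs => ((hasDerivAt_gaux (by linarith [hs.1] : (0:ℝ) < s)).continuousAt).continuousWithinAt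
  have hcont2 : ContinuousOn (gaux α β μ) (Set.Icc (ξ - δ) ξ) :=
    fun s hs => ((hasDerivAt_gaux (by linarith [hs.1] : (0:ℝ) < s)).continuousAt).continuousWithinAt
  obtain ⟨c₁, hc₁, e₁⟩ := exists_hasDerivAt_eq_slope (gaux α β μ) (g1aux α β μ)
    (show ξ < ξ + δ by linarith) hcont
    (fun s hs => hasDerivAt_gaux (by linarith [hs.1]))
  obtain ⟨c₂, hc₂, e₂⟩ := exists_hasDerivAt_eq_slope (gaux α β μ) (g1aux α β μ)
    (show ξ - δ < ξ by linarith) hcont2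
    (fun s hs => hasDerivAt_gaux (by linarith [hs.1]))
  have hc21 : c₂ < c₁ := lt_trans hc₂.2 hc₁.1
  have hcont3 : ContinuousOn (g1aux α β μ) (Set.Icc c₂ c₁) :=
    fun s hs => ((hasDerivAt_g1aux (by linarith [hs.1, hc₂.1] : (0:ℝ) < s)).continuousAt).continuousWithinAt
  obtain ⟨c₃, hc₃, e₃⟩ := exists_hasDerivAt_eq_slope (g1aux α β μ) (g2aux α β μ)
    hc21 hcont3 (fun s hs => hasDerivAt_g1aux (by linarith [hs.1, hc₂.1]))
  refine ⟨c₃, by linarith [hc₃.1, hc₂.1], by linarith [hc₃.2, hc₁.2], ?_⟩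
  have hδne : δ ≠ 0 := hδ0.ne'
  have E1 : gaux α β μ (ξ + δ) - gaux α β μ ξ = g1aux α β μ c₁ * δ := by
    rw [e₁, show ξ + δ - ξ = δ by ring]; field_simp
  have E2 : gaux α β μ ξ - gaux α β μ (ξ - δ) = g1aux α β μ c₂ * δ := by
    rw [e₂, show ξ - (ξ - δ) = δ by ring]; field_simp
  have E3 : g1aux α β μ c₁ - g1aux α β μ c₂ = g2aux α β μ c₃ * (c₁ - c₂) := by
    rw [e₃]; field_simp [sub_ne_zero.mpr hc21.ne']
  have key : gaux α β μ (ξ + δ) - 2 * gaux α β μ ξ + gaux α β μ (ξ - δ)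
      = g2aux α β μ c₃ * (c₁ - c₂) * δ := by
    have : gaux α β μ (ξ + δ) - 2 * gaux α β μ ξ + gaux α β μ (ξ - δ)
        = (gaux α β μ (ξ + δ) - gaux α β μ ξ) - (gaux α β μ ξ - gaux α β μ (ξ - δ)) := by ring
    rw [this, E1, E2, ← E3]; ring
  rw [key, abs_mul, abs_mul, abs_of_pos hδ0]
  have h12 : |c₁ - c₂| ≤ 2 * δ := by
    rw [abs_of_pos (by linarith)]
    linarith [hc₁.2, hc₂.1]
  calc |g2aux α β μ c₃| * |c₁ - c₂| * δ ≤ |g2aux α β μ c₃| * (2*δ) * δ := by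
        apply mul_le_mul_of_nonneg_right (mul_le_mul_of_nonneg_left h12 (abs_nonneg _)) hδ0.le
    _ = 2 * δ ^ 2 * |g2aux α β μ c₃| := by ring

def CBaux (α β μ : ℝ) : ℝ :=
  C0aux α β μ * (2*α + 32*α^2 + 4*β*μ + 128*β^2*μ^2)

lemma g2_bound {α β μ : ℝ} (hα : 0 < α) (hβ : 0 < β) (hμ0 : 0 < μ) (hμ2 : μ < 2)
    {ξ c : ℝ} (hξ : 0 < ξ) (hc1 : ξ / 2 ≤ c) (hc2 : c ≤ 2 * ξ) :
    |g2aux α β μ c| ≤ CBaux α β μ *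
      ((1 + ξ ^ 2 + ξ ^ (μ/2 - 2)) * Real.exp (-(α/8) * ξ ^ 2)) := by
  have hc0 : 0 < c := lt_of_lt_of_le (by linarith) hc1
  set X := ξ ^ (μ/2 - 2) with hX
  have hXpos : 0 < X := Real.rpow_pos_of_pos hξ _
  have e1 : c ^ (μ - 2) ≤ 4 * ξ ^ (μ - 2) := by
    have h1 : c ^ (μ - 2) ≤ (ξ/2) ^ (μ - 2) :=
      Real.rpow_le_rpow_of_nonpos (by linarith) hc1 (by linarith)
    have h2 : (ξ/2) ^ (μ - 2) = ξ ^ (μ-2) / 2 ^ (μ-2) :=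
      Real.div_rpow hξ.le (by norm_num : (0:ℝ) ≤ 2) (μ - 2)
    have h4 : (2:ℝ) ^ (-2:ℝ) = 1/4 := by
      rw [show (-2:ℝ) = ((-2:ℤ):ℝ) by norm_num, Real.rpow_intCast]
      norm_num
    have h5 : (1:ℝ)/4 ≤ 2 ^ (μ-2) := by
      rw [← h4]
      exact Real.rpow_le_rpow_of_exponent_le one_le_two (by linarith)
    have h6 : ξ ^ (μ-2) / 2 ^ (μ-2) ≤ ξ ^ (μ-2) / (1/4) :=
      div_le_div_of_nonneg_left (Real.rpow_nonneg hξ.le _) (by norm_num) h5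
    calc c ^ (μ-2) ≤ ξ ^ (μ-2) / 2 ^ (μ-2) := h2 ▸ h1
      _ ≤ ξ ^ (μ-2) / (1/4) := h6
      _ = 4 * ξ ^ (μ-2) := by ring
  have e2 : c ^ (μ - 1) ≤ 8 * ξ ^ (μ - 1) := by
    rw [Real.rpow_sub_one hc0.ne', Real.rpow_sub_one hξ.ne']
    have h1 : c ^ μ ≤ (2*ξ) ^ μ := Real.rpow_le_rpow hc0.le hc2 hμ0.le
    have h2 : (2*ξ) ^ μ = 2 ^ μ * ξ ^ μ := Real.mul_rpow (by norm_num) hξ.le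
    have h3 : (2:ℝ) ^ μ ≤ 4 := by
      calc (2:ℝ) ^ μ ≤ 2 ^ (2:ℝ) := Real.rpow_le_rpow_of_exponent_le one_le_two (by linarith)
        _ = 4 := by rw [Real.rpow_two]; norm_num
    have h4 : c ^ μ ≤ 4 * ξ ^ μ := by
      calc c ^ μ ≤ 2 ^ μ * ξ ^ μ := h2 ▸ h1
        _ ≤ 4 * ξ ^ μ := mul_le_mul_of_nonneg_right h3 (Real.rpow_nonneg hξ.le _)
    calc c ^ μ / c ≤ 4 * ξ ^ μ / (ξ/2) := by
          apply div_le_div₀ (by positivity) h4 (by linarith) (by linarith)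
      _ = 8 * (ξ ^ μ / ξ) := by ring
  have e3 : c ^ 2 ≤ 4 * ξ ^ 2 := by nlinarith
  have e4 : gaux α β μ c ≤ C0aux α β μ * Real.exp (-(α/8) * ξ ^ 2) := by
    have h1 := gaux_le hα hβ hμ0 hμ2 c
    have hcsq : ξ^2/4 ≤ c^2 := by nlinarith
    have h2 : Real.exp (-(α/2) * c ^ 2) ≤ Real.exp (-(α/8) * ξ ^ 2) := by
      apply Real.exp_le_exp.mpr
      nlinarith [mul_le_mul_of_nonneg_left hcsq (by positivity : (0:ℝ) ≤ α/2)]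
    calc gaux α β μ c ≤ C0aux α β μ * Real.exp (-(α/2) * c^2) := h1
      _ ≤ C0aux α β μ * Real.exp (-(α/8) * ξ^2) :=
          mul_le_mul_of_nonneg_left h2 (C0aux_pos α β μ).le
  have e5 : ξ ^ (μ - 2) ≤ X + 1 := by
    rcases le_total ξ 1 with h | h
    · have : ξ ^ (μ - 2) ≤ ξ ^ (μ/2 - 2) :=
        Real.rpow_le_rpow_of_exponent_ge hξ h (by linarith)
      linarith
    · have : ξ ^ (μ - 2) ≤ 1 := Real.rpow_le_one_of_one_le_of_nonpos h (by linarith)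
      linarith
  have e6 : (ξ ^ (μ - 1)) ^ 2 ≤ X + ξ ^ 2 := by
    have h0 : (ξ ^ (μ-1)) ^ 2 = ξ ^ (2*μ - 2) := by
      rw [← Real.rpow_natCast (ξ ^ (μ-1)) 2, ← Real.rpow_mul hξ.le]
      ring_nf
    rw [h0]
    rcases le_total ξ 1 with h | h
    · have : ξ ^ (2*μ - 2) ≤ ξ ^ (μ/2 - 2) :=
        Real.rpow_le_rpow_of_exponent_ge hξ h (by linarith)
      nlinarith [sq_nonneg ξ]
    · calc ξ ^ (2*μ - 2) ≤ ξ ^ (2:ℝ) :=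
            Real.rpow_le_rpow_of_exponent_le h (by linarith)
        _ = ξ ^ 2 := Real.rpow_two ξ
        _ ≤ X + ξ ^ 2 := by linarith [hXpos.le]
  -- assemble
  have hβμ : (0:ℝ) < β * μ := by positivity
  have habs : |g2aux α β μ c| ≤
      (β * μ * c ^ (μ-2) + 2*α + 2*(β*μ)^2 * (c ^ (μ-1))^2 + 8*α^2 * c^2) * gaux α β μ c := by
    rw [g2aux, abs_mul, abs_of_pos (gaux_pos α β μ c)]
    apply mul_le_mul_of_nonneg_right _ (gaux_pos α β μ c).le
    have h1 : |β * μ * (μ - 1) * c ^ (μ - 2) - 2 * α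
        + (β * μ * c ^ (μ - 1) - 2 * α * c) ^ 2|
        ≤ |β * μ * (μ - 1) * c ^ (μ - 2) - 2 * α| + (β * μ * c ^ (μ - 1) - 2 * α * c) ^ 2 := by
      refine (abs_add_le _ _).trans ?_
      rw [abs_of_nonneg (sq_nonneg (β * μ * c ^ (μ - 1) - 2 * α * c))]
    have hcp : 0 < c ^ (μ-2) := Real.rpow_pos_of_pos hc0 _
    have hu1 : β * μ * (μ - 1) * c ^ (μ - 2) ≤ β * μ * c ^ (μ-2) := by
      nlinarith [mul_pos hβμ hcp]
    have hu2 : -(β * μ * c ^ (μ-2)) ≤ β * μ * (μ - 1) * c ^ (μ - 2) := by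
      nlinarith [mul_pos hβμ hcp]
    have h2 : |β * μ * (μ - 1) * c ^ (μ - 2) - 2 * α| ≤ β * μ * c ^ (μ-2) + 2*α := by
      rw [abs_sub_le_iff]
      constructor <;> [linarith; linarith]
    have h3 : (β * μ * c ^ (μ - 1) - 2 * α * c) ^ 2
        ≤ 2*(β*μ)^2 * (c ^ (μ-1))^2 + 8*α^2 * c^2 := by
      nlinarith [sq_nonneg (β * μ * c ^ (μ - 1) + 2 * α * c)]
    linarith
  set T := 1 + ξ^2 + X with hT
  have hT1 : 1 ≤ T := by nlinarith [sq_nonneg ξ]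
  have hT0 : 0 < T := by linarith
  have c1 : c ^ (μ-2) ≤ 4*T := by nlinarith [sq_nonneg ξ]
  have c2 : (c ^ (μ-1))^2 ≤ 64*T := by
    have hnn : 0 ≤ c ^ (μ-1) := (Real.rpow_pos_of_pos hc0 _).le
    have := pow_le_pow_left₀ hnn e2 2
    nlinarith [e6]
  have c3 : c^2 ≤ 4*T := by nlinarith [hXpos]
  have hfinal : β * μ * c ^ (μ-2) + 2*α + 2*(β*μ)^2 * (c ^ (μ-1))^2 + 8*α^2 * c^2
      ≤ (2*α + 32*α^2 + 4*β*μ + 128*β^2*μ^2) * T := by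
    have b1 : β * μ * c ^ (μ-2) ≤ β * μ * (4*T) := mul_le_mul_of_nonneg_left c1 hβμ.le
    have b2 : 2*(β*μ)^2 * (c ^ (μ-1))^2 ≤ 2*(β*μ)^2 * (64*T) :=
      mul_le_mul_of_nonneg_left c2 (by positivity)
    have b3 : 8*α^2 * c^2 ≤ 8*α^2 * (4*T) := mul_le_mul_of_nonneg_left c3 (by positivity)
    have b4 : 2*α ≤ 2*α*T := le_mul_of_one_le_right (by positivity) hT1
    nlinarith [b1, b2, b3, b4]
  calc |g2aux α β μ c| ≤
      (β * μ * c ^ (μ-2) + 2*α + 2*(β*μ)^2 * (c ^ (μ-1))^2 + 8*α^2 * c^2) * gaux α β μ c := habs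
    _ ≤ ((2*α + 32*α^2 + 4*β*μ + 128*β^2*μ^2) * T)
        * (C0aux α β μ * Real.exp (-(α/8) * ξ^2)) := by
        apply mul_le_mul hfinal e4 (gaux_pos α β μ c).le
        positivity
    _ = CBaux α β μ * (T * Real.exp (-(α/8) * ξ^2)) := by
        rw [CBaux]; ring

def CLaux (β : ℝ) : ℝ := 12 * Real.exp (9*β)

lemma near_bound {α β μ : ℝ} (hα : 0 < α) (hβ : 0 < β) (hμ0 : 0 < μ) (hμ2 : μ < 2)
    {s r : ℝ} (hs : |s| ≤ 3) (hr : |r| ≤ 3) :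
    |gaux α β μ s - gaux α β μ r| ≤ CLaux β * (α + β) * (|s - r| + |s - r| ^ (μ/2)) := by
  set p := μ/2 with hp
  have hp0 : 0 < p := by positivity
  have hp1 : p ≤ 1 := by rw [hp]; linarith
  set Fs := β * |s| ^ μ - α * s ^ 2 with hFs
  set Fr := β * |r| ^ μ - α * r ^ 2 with hFr
  have hexp9 : ∀ u : ℝ, |u| ≤ 3 → Real.exp (β * |u| ^ μ - α * u^2) ≤ Real.exp (9*β) := by
    intro u hu
    apply Real.exp_le_exp.mpr
    have h1 : |u| ^ μ ≤ 3 ^ μ := Real.rpow_le_rpow (abs_nonneg u) hu hμ0.le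
    have h2 : (3:ℝ) ^ μ ≤ 9 := by
      calc (3:ℝ) ^ μ ≤ 3 ^ (2:ℝ) :=
            Real.rpow_le_rpow_of_exponent_le (by norm_num) (by linarith)
        _ = 9 := by rw [Real.rpow_two]; norm_num
    nlinarith [sq_nonneg u, mul_le_mul_of_nonneg_left (h1.trans h2) hβ.le]
  have key := abs_exp_sub_exp_le Fs Fr
  have hFdiff : |Fs - Fr| ≤ 6 * (α + β) * (|s - r| + |s - r| ^ p) := by
    have hd : Fs - Fr = β * (|s| ^ μ - |r| ^ μ) - α * (s^2 - r^2) := by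
      rw [hFs, hFr]; ring
    have h1 : |Fs - Fr| ≤ β * |(|s| ^ μ - |r| ^ μ)| + α * |s^2 - r^2| := by
      rw [hd]
      refine (abs_sub _ _).trans ?_
      rw [abs_mul, abs_mul, abs_of_pos hβ, abs_of_pos hα]
    have h2 : |(|s| ^ μ - |r| ^ μ)| ≤ |s - r| ^ p * (|s| ^ p + |r| ^ p) :=
      abs_rpow_mu_sub_le hμ0 hμ2
    have h3 : |s| ^ p + |r| ^ p ≤ 6 := by
      have k : ∀ u : ℝ, |u| ≤ 3 → |u| ^ p ≤ 3 := by
        intro u hu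
        calc |u| ^ p ≤ 3 ^ p := Real.rpow_le_rpow (abs_nonneg u) hu hp0.le
          _ ≤ 3 ^ (1:ℝ) := Real.rpow_le_rpow_of_exponent_le (by norm_num) hp1
          _ = 3 := Real.rpow_one 3
      linarith [k s hs, k r hr]
    have h4 : |s^2 - r^2| ≤ 6 * |s - r| := by
      have : s^2 - r^2 = (s+r) * (s-r) := by ring
      rw [this, abs_mul]
      have : |s + r| ≤ 6 := (abs_add_le s r).trans (by linarith)
      exact mul_le_mul_of_nonneg_right this (abs_nonneg _)
    have h5 : |(|s| ^ μ - |r| ^ μ)| ≤ 6 * |s - r| ^ p := by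
      refine h2.trans ?_
      have := mul_le_mul_of_nonneg_left h3 (Real.rpow_nonneg (abs_nonneg (s-r)) p)
      linarith
    have hb1 : β * |(|s| ^ μ - |r| ^ μ)| ≤ β * (6 * |s - r| ^ p) :=
      mul_le_mul_of_nonneg_left h5 hβ.le
    have hb2 : α * |s^2 - r^2| ≤ α * (6 * |s - r|) :=
      mul_le_mul_of_nonneg_left h4 hα.le
    have hnn1 : 0 ≤ |s - r| := abs_nonneg _
    have hnn2 : 0 ≤ |s - r| ^ p := Real.rpow_nonneg hnn1 p
    nlinarith [mul_nonneg hβ.le hnn1, mul_nonneg hα.le hnn2]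
  have hsum : Real.exp Fs + Real.exp Fr ≤ 2 * Real.exp (9*β) := by
    have := hexp9 s hs
    have := hexp9 r hr
    rw [hFs, hFr]
    simp only [hFs, hFr] at *
    linarith
  have hABS : |Fs - Fr| ≥ 0 := abs_nonneg _
  calc |gaux α β μ s - gaux α β μ r| = |Real.exp Fs - Real.exp Fr| := rfl
    _ ≤ (Real.exp Fs + Real.exp Fr) * |Fs - Fr| := key
    _ ≤ (2 * Real.exp (9*β)) * (6 * (α + β) * (|s - r| + |s - r| ^ p)) := by
        apply mul_le_mul hsum hFdiff hABS
        positivity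
    _ = CLaux β * (α + β) * (|s - r| + |s - r| ^ p) := by
        rw [CLaux]; ring

def I0aux (α : ℝ) : ℝ := ∫ ξ : ℝ, (1 + ξ^2) * Real.exp (-(α/8) * ξ^2)

def Cmod (α β μ : ℝ) : ℝ :=
  16 * CLaux β * (α+β) + 4 * CBaux α β μ * I0aux α + 4 * CBaux α β μ / (1 - μ/2)

lemma I0aux_nonneg (α : ℝ) : 0 ≤ I0aux α := by
  apply integral_nonneg
  intro ξ
  positivity

lemma int_one_add_sq_exp {α : ℝ} (hα : 0 < α) :
    Integrable (fun ξ : ℝ => (1 + ξ^2) * Real.exp (-(α/8) * ξ^2)) := by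
  have h8 : (0:ℝ) < α/8 := by linarith
  have h1 : Integrable (fun ξ : ℝ => Real.exp (-(α/8) * ξ^2)) := integrable_exp_neg_mul_sq h8
  have h2 : Integrable (fun ξ : ℝ => ξ ^ (2:ℝ) * Real.exp (-(α/8) * ξ^2)) :=
    integrable_rpow_mul_exp_neg_mul_sq h8 (by norm_num)
  have h2' : Integrable (fun ξ : ℝ => ξ ^ 2 * Real.exp (-(α/8) * ξ^2)) := by
    have : (fun ξ : ℝ => ξ ^ 2 * Real.exp (-(α/8) * ξ^2))
        = fun ξ : ℝ => ξ ^ (2:ℝ) * Real.exp (-(α/8) * ξ^2) := by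
      funext ξ; rw [Real.rpow_two]
    rw [this]; exact h2
  have := h1.add h2'
  apply this.congr
  filter_upwards with ξ
  simp only [Pi.add_apply]
  ring

lemma Dfun_integrable {α β μ : ℝ} (hα : 0 < α) (hβ : 0 < β) (hμ0 : 0 < μ) (hμ2 : μ < 2)
    (δ : ℝ) :
    Integrable (fun ξ : ℝ => gaux α β μ (ξ+δ) - 2 * gaux α β μ ξ + gaux α β μ (ξ-δ)) := by
  have h0 := gaux_integrable hα hβ hμ0 hμ2
  have h1 : Integrable (fun ξ : ℝ => gaux α β μ (ξ+δ)) := h0.comp_add_right δ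
  have h2 : Integrable (fun ξ : ℝ => 2 * gaux α β μ ξ) := h0.const_mul 2
  have h3 : Integrable (fun ξ : ℝ => gaux α β μ (ξ-δ)) := h0.comp_sub_right δ
  exact (h1.sub h2).add h3

lemma modulus_bound {α β μ : ℝ} (hα : 0 < α) (hβ : 0 < β) (hμ0 : 0 < μ) (hμ2 : μ < 2)
    {δ : ℝ} (hδ0 : 0 < δ) (hδ1 : δ ≤ 1) :
    ∫ ξ : ℝ, |gaux α β μ (ξ+δ) - 2 * gaux α β μ ξ + gaux α β μ (ξ-δ)|
      ≤ Cmod α β μ * δ ^ (1 + μ/2) := by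
  set p := μ/2 with hp
  have hp0 : 0 < p := by positivity
  have hp1 : p ≤ 1 := by rw [hp]; linarith
  set D : ℝ → ℝ := fun ξ => gaux α β μ (ξ+δ) - 2 * gaux α β μ ξ + gaux α β μ (ξ-δ) with hD
  have hDeven : ∀ ξ : ℝ, D |ξ| = D ξ := by
    intro ξ
    rcases le_or_gt 0 ξ with h | h
    · rw [abs_of_nonneg h]
    · rw [abs_of_neg h, hD]
      simp only
      rw [show -ξ + δ = -(ξ - δ) by ring, show -ξ - δ = -(ξ + δ) by ring,
        gaux_neg_arg, gaux_neg_arg, gaux_neg_arg]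
      ring
  have hDint := Dfun_integrable hα hβ hμ0 hμ2 (α := α) (β := β) (μ := μ) δ
  have hDabsint : Integrable (fun ξ => |D ξ|) := hDint.abs
  -- reduce to Ioi 0
  have heven : ∫ ξ : ℝ, |D ξ| = 2 * ∫ ξ in Set.Ioi (0:ℝ), |D ξ| := by
    rw [← integral_comp_abs (f := fun ξ => |D ξ|)]
    congr 1
    funext ξ
    rw [hDeven ξ]
  -- split the half line
  have h2δ : (0:ℝ) < 2*δ := by linarith
  have hsplit : ∫ ξ in Set.Ioi (0:ℝ), |D ξ|
      = (∫ ξ in Set.Ioc (0:ℝ) (2*δ), |D ξ|) + ∫ ξ in Set.Ioi (2*δ), |D ξ| := by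
    rw [← setIntegral_union (Set.Ioc_disjoint_Ioi le_rfl) measurableSet_Ioi
      (hDabsint.integrableOn) (hDabsint.integrableOn), Set.Ioc_union_Ioi_eq_Ioi h2δ.le]
  -- near part
  set CL := CLaux β * (α + β) with hCL
  have hCLpos : 0 < CL := by rw [hCL, CLaux]; positivity
  have hnear_pt : ∀ ξ ∈ Set.Ioc (0:ℝ) (2*δ), |D ξ| ≤ 2 * CL * (δ + δ ^ p) := by
    intro ξ hξ
    obtain ⟨hξ0, hξ2⟩ := hξ
    have key : D ξ = (gaux α β μ (ξ+δ) - gaux α β μ ξ) + (gaux α β μ (ξ-δ) - gaux α β μ ξ) := by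
      rw [hD]; ring
    have b1 : |gaux α β μ (ξ+δ) - gaux α β μ ξ| ≤ CL * (δ + δ ^ p) := by
      have h1 : |ξ + δ| ≤ 3 := by rw [abs_of_pos (by linarith)]; linarith
      have h2 : |ξ| ≤ 3 := by rw [abs_of_pos hξ0]; linarith
      have := near_bound hα hβ hμ0 hμ2 h1 h2
      rw [show ξ + δ - ξ = δ by ring, abs_of_pos hδ0] at this
      exact this
    have b2 : |gaux α β μ (ξ-δ) - gaux α β μ ξ| ≤ CL * (δ + δ ^ p) := by
      have h1 : |ξ - δ| ≤ 3 := by rw [abs_le]; constructor <;> linarith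
      have h2 : |ξ| ≤ 3 := by rw [abs_of_pos hξ0]; linarith
      have := near_bound hα hβ hμ0 hμ2 h1 h2
      rw [show ξ - δ - ξ = -δ by ring, abs_neg, abs_of_pos hδ0] at this
      exact this
    calc |D ξ| ≤ |gaux α β μ (ξ+δ) - gaux α β μ ξ| + |gaux α β μ (ξ-δ) - gaux α β μ ξ| := by
          rw [key]; exact abs_add_le _ _
      _ ≤ 2 * CL * (δ + δ ^ p) := by linarith
  have hnear : ∫ ξ in Set.Ioc (0:ℝ) (2*δ), |D ξ| ≤ 2*δ * (2 * CL * (δ + δ ^ p)) := by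
    have hvol : volume (Set.Ioc (0:ℝ) (2*δ)) < ⊤ := by
      rw [Real.volume_Ioc]; exact ENNReal.ofReal_lt_top
    have := norm_setIntegral_le_of_norm_le_const (μ := volume) (s := Set.Ioc (0:ℝ) (2*δ))
      (f := fun ξ => |D ξ|) (C := 2 * CL * (δ + δ ^ p)) hvol
      (fun ξ hξ => by rw [Real.norm_eq_abs, abs_abs]; exact hnear_pt ξ hξ)
    have hvol2 : volume.real (Set.Ioc (0:ℝ) (2*δ)) = 2*δ := by
      rw [measureReal_def, Real.volume_Ioc, ENNReal.toReal_ofReal (by linarith)]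
      ring
    rw [hvol2] at this
    calc ∫ ξ in Set.Ioc (0:ℝ) (2*δ), |D ξ| ≤ ‖∫ ξ in Set.Ioc (0:ℝ) (2*δ), |D ξ|‖ :=
          le_abs_self _
      _ ≤ 2 * CL * (δ + δ ^ p) * (2*δ) := this
      _ = 2*δ * (2 * CL * (δ + δ ^ p)) := by ring
  -- far part
  set CB := CBaux α β μ with hCB
  have hCBpos : 0 < CB := by
    rw [hCB, CBaux]
    have := C0aux_pos α β μ
    positivity
  set E : ℝ → ℝ := fun ξ => Real.exp (-(α/8) * ξ^2) with hE
  set W : ℝ → ℝ := fun ξ => (1 + ξ^2 + ξ ^ (p - 2)) * E ξ with hW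
  have hfar_pt : ∀ ξ ∈ Set.Ioi (2*δ), |D ξ| ≤ 2*δ^2 * CB * W ξ := by
    intro ξ hξ
    have hξδ : 2*δ ≤ ξ := le_of_lt hξ
    have hξ0 : 0 < ξ := lt_trans h2δ hξ
    obtain ⟨c, hc1, hc2, hc3⟩ := far_pointwise (α := α) (β := β) (μ := μ) hδ0 hξδ
    have := g2_bound hα hβ hμ0 hμ2 hξ0 hc1 hc2
    calc |D ξ| ≤ 2*δ^2 * |g2aux α β μ c| := hc3
      _ ≤ 2*δ^2 * (CB * ((1 + ξ^2 + ξ ^ (p-2)) * E ξ)) := by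
          apply mul_le_mul_of_nonneg_left _ (by positivity)
          exact this
      _ = 2*δ^2 * CB * W ξ := by rw [hW]; ring
  have hrpow_int : IntegrableOn (fun ξ : ℝ => ξ ^ (p-2)) (Set.Ioi (2*δ)) :=
    integrableOn_Ioi_rpow_of_lt (by linarith) h2δ
  have hrpowE_int : IntegrableOn (fun ξ : ℝ => ξ ^ (p-2) * E ξ) (Set.Ioi (2*δ)) := by
    apply Integrable.mono' hrpow_int
    · have hcontOn : ContinuousOn (fun ξ : ℝ => ξ ^ (p-2) * E ξ) (Set.Ioi (2*δ)) := by
        apply ContinuousOn.mul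
        · intro s hs
          exact (continuousAt_id.rpow_const (Or.inl (ne_of_gt (lt_trans h2δ hs)))).continuousWithinAt
        · apply Continuous.continuousOn
          exact Real.continuous_exp.comp (continuous_const.mul (continuous_pow 2))
      exact hcontOn.aestronglyMeasurable measurableSet_Ioi
    · filter_upwards [ae_restrict_mem measurableSet_Ioi] with ξ hξ
      have hξ0 : 0 < ξ := lt_trans h2δ hξ
      rw [Real.norm_eq_abs, abs_mul, abs_of_pos (Real.rpow_pos_of_pos hξ0 _),
        abs_of_pos (Real.exp_pos _)]
      have hE1 : E ξ ≤ 1 := Real.exp_le_one_iff.mpr (by nlinarith [sq_nonneg ξ])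
      nlinarith [Real.rpow_pos_of_pos hξ0 (p-2), (Real.exp_pos (-(α/8) * ξ^2)).le]
  have honeE_int : Integrable (fun ξ : ℝ => (1 + ξ^2) * E ξ) := int_one_add_sq_exp hα
  have hW_int : IntegrableOn W (Set.Ioi (2*δ)) := by
    have : W = fun ξ => (1 + ξ^2) * E ξ + ξ ^ (p-2) * E ξ := by
      funext ξ; rw [hW]; ring
    rw [this]
    exact honeE_int.integrableOn.add hrpowE_int
  have hfar : ∫ ξ in Set.Ioi (2*δ), |D ξ|
      ≤ 2*δ^2 * CB * (I0aux α + δ ^ (p-1) / (1-p)) := by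
    have step1 : ∫ ξ in Set.Ioi (2*δ), |D ξ| ≤ ∫ ξ in Set.Ioi (2*δ), 2*δ^2 * CB * W ξ := by
      apply setIntegral_mono_on hDabsint.integrableOn
        ((hW_int.const_mul (2*δ^2 * CB))) measurableSet_Ioi hfar_pt
    have step2 : ∫ ξ in Set.Ioi (2*δ), 2*δ^2 * CB * W ξ
        = 2*δ^2 * CB * ∫ ξ in Set.Ioi (2*δ), W ξ := integral_const_mul _ _
    have step3 : ∫ ξ in Set.Ioi (2*δ), W ξ
        = (∫ ξ in Set.Ioi (2*δ), (1 + ξ^2) * E ξ) + ∫ ξ in Set.Ioi (2*δ), ξ ^ (p-2) * E ξ := by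
      rw [← integral_add honeE_int.integrableOn hrpowE_int]
      congr 1; funext ξ; rw [hW]; ring
    have step4 : ∫ ξ in Set.Ioi (2*δ), (1 + ξ^2) * E ξ ≤ I0aux α := by
      rw [I0aux]
      apply setIntegral_le_integral honeE_int
      filter_upwards with ξ
      positivity
    have step5 : ∫ ξ in Set.Ioi (2*δ), ξ ^ (p-2) * E ξ ≤ δ ^ (p-1) / (1-p) := by
      have s1 : ∫ ξ in Set.Ioi (2*δ), ξ ^ (p-2) * E ξ ≤ ∫ ξ in Set.Ioi (2*δ), ξ ^ (p-2) := by
        apply setIntegral_mono_on hrpowE_int hrpow_int measurableSet_Ioi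
        intro ξ hξ
        have hξ0 : 0 < ξ := lt_trans h2δ hξ
        have hE1 : E ξ ≤ 1 := Real.exp_le_one_iff.mpr (by nlinarith [sq_nonneg ξ])
        nlinarith [Real.rpow_pos_of_pos hξ0 (p-2), (Real.exp_pos (-(α/8) * ξ^2)).le]
      have s2 : ∫ ξ in Set.Ioi (2*δ), ξ ^ (p-2) = -(2*δ) ^ (p-2+1) / (p-2+1) :=
        integral_Ioi_rpow_of_lt (by linarith) h2δ
      have s3 : -(2*δ) ^ (p-2+1) / (p-2+1) = (2*δ) ^ (p-1) / (1-p) := by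
        rw [show p-2+1 = p-1 by ring]
        rw [div_eq_div_iff (by linarith) (by linarith)]
        ring
      have s4 : (2*δ) ^ (p-1) ≤ δ ^ (p-1) := by
        rw [Real.mul_rpow (by norm_num) hδ0.le]
        have h21 : (2:ℝ) ^ (p-1) ≤ 1 :=
          Real.rpow_le_one_of_one_le_of_nonpos one_le_two (by linarith)
        nlinarith [Real.rpow_pos_of_pos hδ0 (p-1)]
      have s5 : (2*δ) ^ (p-1) / (1-p) ≤ δ ^ (p-1) / (1-p) :=
        (div_le_div_iff_of_pos_right (by linarith)).mpr s4
      calc ∫ ξ in Set.Ioi (2*δ), ξ ^ (p-2) * E ξ ≤ ∫ ξ in Set.Ioi (2*δ), ξ ^ (p-2) := s1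
        _ = (2*δ) ^ (p-1) / (1-p) := by rw [s2, s3]
        _ ≤ δ ^ (p-1) / (1-p) := s5
    calc ∫ ξ in Set.Ioi (2*δ), |D ξ| ≤ 2*δ^2 * CB * ∫ ξ in Set.Ioi (2*δ), W ξ := by
          rw [← step2]; exact step1
      _ ≤ 2*δ^2 * CB * (I0aux α + δ ^ (p-1) / (1-p)) := by
          apply mul_le_mul_of_nonneg_left _ (by positivity)
          rw [step3]; linarith
  -- combine, with rpow arithmetic
  have hδ1p : δ ^ (1:ℝ) * δ ^ p = δ ^ (1+p) := (Real.rpow_add hδ0 1 p).symm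
  have hδ1' : δ ^ (1:ℝ) = δ := Real.rpow_one δ
  have hδsq : δ^2 ≤ δ ^ (1+p) := by
    rw [← Real.rpow_two]
    exact Real.rpow_le_rpow_of_exponent_ge hδ0 hδ1 (by linarith)
  have hδmul : δ * δ ^ p = δ ^ (1+p) := by rw [← hδ1p, hδ1']
  have hδ2pm : δ^2 * δ ^ (p-1) = δ ^ (1+p) := by
    rw [← Real.rpow_two, ← Real.rpow_add hδ0]
    congr 1; ring
  have hδppos : 0 < δ ^ (1+p) := Real.rpow_pos_of_pos hδ0 _
  have hnear2 : ∫ ξ in Set.Ioc (0:ℝ) (2*δ), |D ξ| ≤ 8 * CL * δ ^ (1+p) := by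
    have : 2*δ * (2 * CL * (δ + δ ^ p)) = 4*CL*δ^2 + 4*CL*(δ * δ ^ p) := by ring
    rw [this, hδmul] at hnear
    nlinarith [hnear, mul_le_mul_of_nonneg_left hδsq (by positivity : (0:ℝ) ≤ 4*CL)]
  have hfar2 : ∫ ξ in Set.Ioi (2*δ), |D ξ|
      ≤ (2 * CB * I0aux α + 2 * CB / (1-p)) * δ ^ (1+p) := by
    have expand : 2*δ^2 * CB * (I0aux α + δ ^ (p-1) / (1-p))
        = 2*CB*I0aux α*δ^2 + 2*CB/(1-p) * (δ^2 * δ ^ (p-1)) := by ring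
    rw [expand, hδ2pm] at hfar
    have hI0 := I0aux_nonneg α
    nlinarith [hfar, mul_le_mul_of_nonneg_left hδsq
      (by positivity : (0:ℝ) ≤ 2*CB*I0aux α)]
  calc ∫ ξ : ℝ, |D ξ| = 2 * ((∫ ξ in Set.Ioc (0:ℝ) (2*δ), |D ξ|) + ∫ ξ in Set.Ioi (2*δ), |D ξ|) := by
        rw [heven, hsplit]
    _ ≤ 2 * (8 * CL * δ ^ (1+p) + (2 * CB * I0aux α + 2 * CB / (1-p)) * δ ^ (1+p)) := by
        have := add_le_add hnear2 hfar2
        linarith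
    _ = Cmod α β μ * δ ^ (1+p) := by
        rw [Cmod, hCL, hCB, hp]
        ring

def chaux (x ξ : ℝ) : ℂ := Complex.exp (2 * ↑π * Complex.I * ↑x * ↑ξ)

lemma chaux_norm (x ξ : ℝ) : ‖chaux x ξ‖ = 1 := by
  rw [chaux, Complex.norm_exp]
  have : (2 * ↑π * Complex.I * ↑x * ↑ξ).re = 0 := by
    simp [Complex.mul_re, Complex.mul_im]
  rw [this, Real.exp_zero]

lemma chaux_cont_x (ξ : ℝ) : Continuous fun x : ℝ => chaux x ξ := by
  apply Complex.continuous_exp.comp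
  have : (fun x : ℝ => 2 * ↑π * Complex.I * ↑x * ↑ξ)
      = fun x : ℝ => (2 * ↑π * Complex.I) * ↑x * (↑ξ : ℂ) := by funext x; ring
  rw [this]
  exact (continuous_const.mul Complex.continuous_ofReal).mul continuous_const

lemma char_mul_integrable {f : ℝ → ℝ} (hf : Integrable f) (x : ℝ) :
    Integrable (fun ξ : ℝ => chaux x ξ * (f ξ : ℂ)) := by
  apply Integrable.mono' hf.norm
  · apply AEStronglyMeasurable.mul
    · apply Continuous.aestronglyMeasurable
      apply Complex.continuous_exp.comp
      have : (fun ξ : ℝ => 2 * ↑π * Complex.I * ↑x * ↑ξ)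
          = fun ξ : ℝ => (2 * ↑π * Complex.I * ↑x) * (↑ξ : ℂ) := by funext ξ; ring
      rw [this]
      exact continuous_const.mul Complex.continuous_ofReal
    · exact Complex.continuous_ofReal.comp_aestronglyMeasurable hf.aestronglyMeasurable
  · filter_upwards with ξ
    rw [norm_mul, chaux_norm, one_mul, Complex.norm_real]

def Kaux (α β μ : ℝ) (x : ℝ) : ℂ := ∫ ξ : ℝ, chaux x ξ * ((gaux α β μ ξ : ℝ) : ℂ)

lemma Kaux_norm_le {α β μ : ℝ} (hα : 0 < α) (hβ : 0 < β) (hμ0 : 0 < μ) (hμ2 : μ < 2)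
    (x : ℝ) : ‖Kaux α β μ x‖ ≤ ∫ ξ : ℝ, gaux α β μ ξ := by
  rw [Kaux]
  refine (norm_integral_le_integral_norm _).trans ?_
  apply le_of_eq
  congr 1
  funext ξ
  rw [norm_mul, chaux_norm, one_mul, Complex.norm_real, Real.norm_eq_abs,
    abs_of_pos (gaux_pos α β μ ξ)]

lemma Kaux_continuous {α β μ : ℝ} (hα : 0 < α) (hβ : 0 < β) (hμ0 : 0 < μ) (hμ2 : μ < 2) :
    Continuous (Kaux α β μ) := by
  apply continuous_of_dominated (bound := gaux α β μ)
  · intro x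
    exact (char_mul_integrable (gaux_integrable hα hβ hμ0 hμ2) x).aestronglyMeasurable
  · intro x
    filter_upwards with ξ
    rw [norm_mul, chaux_norm, one_mul, Complex.norm_real, Real.norm_eq_abs,
      abs_of_pos (gaux_pos α β μ ξ)]
  · exact gaux_integrable hα hβ hμ0 hμ2
  · filter_upwards with ξ
    exact (chaux_cont_x ξ).mul continuous_const

lemma chaux_shift (x η δ : ℝ) : chaux x (η - δ) = chaux x (-δ) * chaux x η := by
  rw [chaux, chaux, chaux, ← Complex.exp_add]
  congr 1
  push_cast
  ring

lemma shift_integral {α β μ : ℝ} (hα : 0 < α) (hβ : 0 < β) (hμ0 : 0 < μ) (hμ2 : μ < 2)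
    (x δ : ℝ) :
    ∫ ξ : ℝ, chaux x ξ * ((gaux α β μ (ξ + δ) : ℝ) : ℂ)
      = chaux x (-δ) * Kaux α β μ x := by
  have step1 : (fun ξ : ℝ => chaux x ξ * ((gaux α β μ (ξ + δ) : ℝ) : ℂ))
      = fun ξ : ℝ => (fun η : ℝ => chaux x (η - δ) * ((gaux α β μ η : ℝ) : ℂ)) (ξ + δ) := by
    funext ξ
    simp only [add_sub_cancel_right]
  rw [step1, integral_add_right_eq_self (fun η : ℝ => chaux x (η - δ) * ((gaux α β μ η : ℝ) : ℂ)) δ]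
  have step2 : (fun η : ℝ => chaux x (η - δ) * ((gaux α β μ η : ℝ) : ℂ))
      = fun η : ℝ => chaux x (-δ) * (chaux x η * ((gaux α β μ η : ℝ) : ℂ)) := by
    funext η
    rw [chaux_shift]
    ring
  rw [step2, integral_const_mul]
  rfl

lemma key_identity {α β μ : ℝ} (hα : 0 < α) (hβ : 0 < β) (hμ0 : 0 < μ) (hμ2 : μ < 2)
    (x δ : ℝ) :
    ∫ ξ : ℝ, chaux x ξ * ((gaux α β μ (ξ+δ) - 2 * gaux α β μ ξ + gaux α β μ (ξ-δ) : ℝ) : ℂ)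
      = (chaux x (-δ) + chaux x δ - 2) * Kaux α β μ x := by
  have hg := gaux_integrable hα hβ hμ0 hμ2
  have i1 : Integrable (fun ξ : ℝ => chaux x ξ * ((gaux α β μ (ξ+δ) : ℝ) : ℂ)) :=
    char_mul_integrable (hg.comp_add_right δ) x
  have i3 : Integrable (fun ξ : ℝ => chaux x ξ * ((gaux α β μ (ξ-δ) : ℝ) : ℂ)) :=
    char_mul_integrable (hg.comp_sub_right δ) x
  have i2 : Integrable (fun ξ : ℝ => (2:ℂ) * (chaux x ξ * ((gaux α β μ ξ : ℝ) : ℂ))) :=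
    (char_mul_integrable hg x).const_mul 2
  have expand : (fun ξ : ℝ =>
      chaux x ξ * ((gaux α β μ (ξ+δ) - 2 * gaux α β μ ξ + gaux α β μ (ξ-δ) : ℝ) : ℂ))
      = fun ξ : ℝ => (chaux x ξ * ((gaux α β μ (ξ+δ) : ℝ) : ℂ)
          - (2:ℂ) * (chaux x ξ * ((gaux α β μ ξ : ℝ) : ℂ)))
          + chaux x ξ * ((gaux α β μ (ξ-δ) : ℝ) : ℂ) := by
    funext ξ
    push_cast
    ring
  rw [expand]
  have e1 : ∫ ξ : ℝ, (chaux x ξ * ((gaux α β μ (ξ+δ) : ℝ) : ℂ)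
      - (2:ℂ) * (chaux x ξ * ((gaux α β μ ξ : ℝ) : ℂ))
      + chaux x ξ * ((gaux α β μ (ξ-δ) : ℝ) : ℂ))
      = ((∫ ξ : ℝ, chaux x ξ * ((gaux α β μ (ξ+δ) : ℝ) : ℂ))
        - ∫ ξ : ℝ, (2:ℂ) * (chaux x ξ * ((gaux α β μ ξ : ℝ) : ℂ)))
        + ∫ ξ : ℝ, chaux x ξ * ((gaux α β μ (ξ-δ) : ℝ) : ℂ) := by
    rw [← integral_sub i1 i2]
    exact integral_add (i1.sub i2) i3
  rw [e1, integral_const_mul, shift_integral hα hβ hμ0 hμ2 x δ]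
  have hminus : ∫ ξ : ℝ, chaux x ξ * ((gaux α β μ (ξ-δ) : ℝ) : ℂ)
      = chaux x δ * Kaux α β μ x := by
    have := shift_integral hα hβ hμ0 hμ2 x (-δ)
    simp only [sub_eq_add_neg, neg_neg] at this ⊢
    exact this
  rw [hminus, Kaux]
  ring

lemma Kaux_decay {α β μ : ℝ} (hα : 0 < α) (hβ : 0 < β) (hμ0 : 0 < μ) (hμ2 : μ < 2)
    {x : ℝ} (hx : 1 ≤ |x|) :
    ‖Kaux α β μ x‖ ≤ Cmod α β μ / 2 * (1 + |x|) ^ (-(1 + μ/2)) := by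
  have hxpos : 0 < |x| := lt_of_lt_of_le one_pos hx
  have hxne : x ≠ 0 := fun h => by simp [h] at hxpos
  set δ : ℝ := 1 / (4 * |x|) with hδ
  have hδ0 : 0 < δ := by positivity
  have hδ1 : δ ≤ 1 := by
    rw [hδ]
    rw [div_le_one (by positivity)]
    linarith
  -- the character factor equals -2
  have hcos : Real.cos (2*π*x*δ) = 0 := by
    rcases lt_or_gt_of_ne hxne with h | h
    · have habs : |x| = -x := abs_of_neg h
      have : 2*π*x*δ = -(π/2) := by
        rw [hδ, habs]
        field_simp
        ring
      rw [this, Real.cos_neg, Real.cos_pi_div_two]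
    · have habs : |x| = x := abs_of_pos h
      have : 2*π*x*δ = π/2 := by
        rw [hδ, habs]
        field_simp
        ring
      rw [this, Real.cos_pi_div_two]
  have hfactor : chaux x (-δ) + chaux x δ - 2 = -2 := by
    have h1 : chaux x δ = Complex.exp (↑(2*π*x*δ) * Complex.I) := by
      rw [chaux]
      congr 1
      push_cast
      ring
    have h2 : chaux x (-δ) = Complex.exp (-↑(2*π*x*δ) * Complex.I) := by
      rw [chaux]
      congr 1
      push_cast
      ring
    rw [h1, h2, Complex.exp_mul_I, Complex.exp_mul_I, Complex.cos_neg, Complex.sin_neg,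
      ← Complex.ofReal_cos, hcos]
    push_cast
    ring
  have hkey := key_identity hα hβ hμ0 hμ2 x δ
  rw [hfactor] at hkey
  have hnorm2 : ‖(-2 : ℂ) * Kaux α β μ x‖ = 2 * ‖Kaux α β μ x‖ := by
    rw [norm_mul]
    norm_num
  have hbound : ‖∫ ξ : ℝ, chaux x ξ *
      ((gaux α β μ (ξ+δ) - 2 * gaux α β μ ξ + gaux α β μ (ξ-δ) : ℝ) : ℂ)‖
      ≤ Cmod α β μ * δ ^ (1 + μ/2) := by
    refine (norm_integral_le_integral_norm _).trans ?_
    have heq : ∀ ξ : ℝ, ‖chaux x ξ *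
        ((gaux α β μ (ξ+δ) - 2 * gaux α β μ ξ + gaux α β μ (ξ-δ) : ℝ) : ℂ)‖
        = |gaux α β μ (ξ+δ) - 2 * gaux α β μ ξ + gaux α β μ (ξ-δ)| := by
      intro ξ
      rw [norm_mul, chaux_norm, one_mul, Complex.norm_real, Real.norm_eq_abs]
    calc ∫ ξ : ℝ, ‖chaux x ξ *
        ((gaux α β μ (ξ+δ) - 2 * gaux α β μ ξ + gaux α β μ (ξ-δ) : ℝ) : ℂ)‖
        = ∫ ξ : ℝ, |gaux α β μ (ξ+δ) - 2 * gaux α β μ ξ + gaux α β μ (ξ-δ)| := by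
          congr 1; funext ξ; exact heq ξ
      _ ≤ Cmod α β μ * δ ^ (1 + μ/2) := modulus_bound hα hβ hμ0 hμ2 hδ0 hδ1
  have h2K : 2 * ‖Kaux α β μ x‖ ≤ Cmod α β μ * δ ^ (1 + μ/2) := by
    rw [← hnorm2, ← hkey]
    exact hbound
  -- δ ^ (1+p) = (4|x|)^(-(1+p)) ≤ (1+|x|)^(-(1+p))
  have hδpow : δ ^ (1 + μ/2) = (4*|x|) ^ (-(1 + μ/2)) := by
    rw [hδ, one_div, Real.inv_rpow (by positivity), ← Real.rpow_neg (by positivity)]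
  have hcomp : (4*|x|) ^ (-(1 + μ/2)) ≤ (1 + |x|) ^ (-(1 + μ/2)) := by
    apply Real.rpow_le_rpow_of_nonpos (by linarith) (by linarith) (by linarith)
  have hCmod_nonneg : 0 ≤ Cmod α β μ := by
    have h1 : 0 < CLaux β := by rw [CLaux]; positivity
    have h2 : 0 < CBaux α β μ := by
      rw [CBaux]; have := C0aux_pos α β μ; positivity
    have h3 := I0aux_nonneg α
    rw [Cmod]
    have : 0 < 1 - μ/2 := by linarith
    positivity
  calc ‖Kaux α β μ x‖ ≤ Cmod α β μ / 2 * δ ^ (1 + μ/2) := by linarith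
    _ = Cmod α β μ / 2 * (4*|x|) ^ (-(1 + μ/2)) := by rw [hδpow]
    _ ≤ Cmod α β μ / 2 * (1 + |x|) ^ (-(1 + μ/2)) := by
        apply mul_le_mul_of_nonneg_left hcomp (by linarith)

lemma Kaux_integrable {α β μ : ℝ} (hα : 0 < α) (hβ : 0 < β) (hμ0 : 0 < μ) (hμ2 : μ < 2) :
    Integrable (Kaux α β μ) := by
  set NK : ℝ := ∫ ξ : ℝ, gaux α β μ ξ with hNK
  have hNK0 : 0 ≤ NK := integral_nonneg fun ξ => (gaux_pos α β μ ξ).le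
  have hCmod_nonneg : 0 ≤ Cmod α β μ := by
    have h1 : 0 < CLaux β := by rw [CLaux]; positivity
    have h2 : 0 < CBaux α β μ := by
      rw [CBaux]; have := C0aux_pos α β μ; positivity
    have h3 := I0aux_nonneg α
    have : 0 < 1 - μ/2 := by linarith
    rw [Cmod]; positivity
  set Cfin : ℝ := 4 * NK + Cmod α β μ / 2 with hCfin
  have hbound : ∀ x : ℝ, ‖Kaux α β μ x‖ ≤ Cfin * (1 + ‖x‖) ^ (-(1 + μ/2)) := by
    intro x
    have hpow_pos : (0:ℝ) < (1 + ‖x‖) ^ (-(1 + μ/2)) :=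
      Real.rpow_pos_of_pos (by positivity) _
    rcases le_total 1 |x| with h | h
    · have hdecay := Kaux_decay hα hβ hμ0 hμ2 h
      have : Cmod α β μ / 2 * (1 + |x|) ^ (-(1 + μ/2)) ≤ Cfin * (1 + |x|) ^ (-(1 + μ/2)) := by
        apply mul_le_mul_of_nonneg_right _ (by positivity)
        rw [hCfin]; linarith
      rw [Real.norm_eq_abs]
      linarith
    · -- |x| ≤ 1 : use trivial bound
      have h1 : ‖Kaux α β μ x‖ ≤ NK := Kaux_norm_le hα hβ hμ0 hμ2 x
      have h2 : (1:ℝ)/4 ≤ (1 + ‖x‖) ^ (-(1 + μ/2)) := by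
        have ha : (1 + ‖x‖) ≤ 2 := by rw [Real.norm_eq_abs]; linarith
        have hb : (1 + ‖x‖) ^ (-(1 + μ/2)) ≥ (2:ℝ) ^ (-(1 + μ/2)) :=
          Real.rpow_le_rpow_of_nonpos (by positivity) ha (by linarith)
        have hc : (2:ℝ) ^ (-(1 + μ/2)) ≥ (2:ℝ) ^ (-2 : ℝ) :=
          Real.rpow_le_rpow_of_exponent_le one_le_two (by linarith)
        have hd : (2:ℝ) ^ (-2:ℝ) = 1/4 := by
          rw [show (-2:ℝ) = ((-2:ℤ):ℝ) by norm_num, Real.rpow_intCast]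
          norm_num
        linarith
      calc ‖Kaux α β μ x‖ ≤ NK := h1
        _ = 4 * NK * (1/4) := by ring
        _ ≤ 4 * NK * ((1 + ‖x‖) ^ (-(1 + μ/2))) := by
            apply mul_le_mul_of_nonneg_left h2 (by linarith)
        _ ≤ Cfin * (1 + ‖x‖) ^ (-(1 + μ/2)) := by
            apply mul_le_mul_of_nonneg_right _ hpow_pos.le
            rw [hCfin]; linarith
  have hint : Integrable (fun x : ℝ => Cfin * (1 + ‖x‖) ^ (-(1 + μ/2))) := by
    apply Integrable.const_mul
    apply integrable_one_add_norm (E := ℝ)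
    simp only [Module.finrank_self, Nat.cast_one]
    linarith
  exact Integrable.mono' hint (Kaux_continuous hα hβ hμ0 hμ2).aestronglyMeasurable
    (Filter.Eventually.of_forall hbound)

theorem kernel_mem_L1
    (a b lam : ℝ) (ha : 0 < a) (hb : 0 < b) (hlam : lam ∈ Set.Ioo (0 : ℝ) 2)
    (t : ℝ) (ht : 0 < t) :
    Integrable (fun x : ℝ => K a b lam t x) volume := by
  obtain ⟨hl0, hl2⟩ := hlam
  have hπ := Real.pi_pos
  set α : ℝ := 4 * π ^ 2 * a * t with hα'
  set β : ℝ := t * b with hβ'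
  have hα : 0 < α := by positivity
  have hβ : 0 < β := by positivity
  have hmain := Kaux_integrable hα hβ hl0 hl2
  apply hmain.congr
  filter_upwards with x
  rw [K, Kaux]
  congr 1
  funext ξ
  rw [chaux]
  congr 1
  rw [gaux, Complex.ofReal_exp]
  congr 1
  rw [psi]
  simp only [hα', hβ', Complex.ofReal_mul, Complex.ofReal_sub, Complex.ofReal_pow,
    Complex.ofReal_neg, Complex.ofReal_ofNat]
  ring
end
end
end

section
/- The kernel has a non-zero negative part: for all parameters a > 0, b > 0, λ ∈ (0,2) and every time t > 0, it is not the case that K(t,x) ≥ 0 for all x ∈ ℝ; there exists x ∈ ℝ with K(t,x) < 0. -/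
open MeasureTheory Real
open scoped ComplexOrder

noncomputable section

/-- Young-type bound: `b|ξ|^λ ≤ 2π²aξ² + C`. -/
lemma psi_bound {a b lam : ℝ} (ha : 0 < a) (hb : 0 < b) (hlam0 : 0 < lam) (hlam2 : lam < 2) :
    ∃ C : ℝ, 0 ≤ C ∧ ∀ ξ : ℝ, b * |ξ| ^ lam ≤ 2 * π ^ 2 * a * ξ ^ 2 + C := by
  have hπ : (0:ℝ) < 2 * π ^ 2 * a := by positivity
  set R : ℝ := max 1 ((b / (2 * π ^ 2 * a)) ^ (1 / (2 - lam))) with hR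
  have hR1 : (1:ℝ) ≤ R := le_max_left _ _
  have hR0 : (0:ℝ) < R := lt_of_lt_of_le one_pos hR1
  refine ⟨b * R ^ lam, by positivity, fun ξ => ?_⟩
  rcases le_or_gt |ξ| R with h | h
  · have h1 : |ξ| ^ lam ≤ R ^ lam := Real.rpow_le_rpow (abs_nonneg ξ) h hlam0.le
    nlinarith [mul_le_mul_of_nonneg_left h1 hb.le, mul_nonneg hπ.le (sq_nonneg ξ)]
  · -- |ξ| > R : show b|ξ|^λ ≤ 2π²aξ²
    have hξ0 : (0:ℝ) < |ξ| := lt_trans hR0 h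
    have h2lam : (0:ℝ) < 2 - lam := by linarith
    have hkey : b / (2 * π ^ 2 * a) ≤ |ξ| ^ (2 - lam) := by
      have : (b / (2 * π ^ 2 * a)) ^ (1 / (2 - lam)) ≤ |ξ| := le_trans (le_max_right _ _) (le_of_lt h)
      calc b / (2 * π ^ 2 * a)
          = ((b / (2 * π ^ 2 * a)) ^ (1 / (2 - lam))) ^ (2 - lam) := by
            rw [← Real.rpow_mul (by positivity), one_div,
              inv_mul_cancel₀ h2lam.ne', Real.rpow_one]
        _ ≤ |ξ| ^ (2 - lam) :=
            Real.rpow_le_rpow (Real.rpow_nonneg (by positivity) _) this h2lam.le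
    have hsplit : ξ ^ 2 = |ξ| ^ lam * |ξ| ^ (2 - lam) := by
      rw [← Real.rpow_add hξ0, show lam + (2 - lam) = 2 by ring, Real.rpow_two, sq_abs]
    have : b * |ξ| ^ lam ≤ 2 * π ^ 2 * a * ξ ^ 2 := by
      rw [hsplit]
      have h3 : b ≤ 2 * π ^ 2 * a * |ξ| ^ (2 - lam) := by
        rw [div_le_iff₀ hπ] at hkey; linarith [hkey]
      nlinarith [Real.rpow_nonneg (abs_nonneg ξ) lam]
    nlinarith [Real.rpow_nonneg (le_of_lt hR0) lam]

lemma psi_continuous (a b lam : ℝ) (hlam0 : 0 < lam) : Continuous (psi a b lam) := by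
  unfold psi
  exact (continuous_const.mul (continuous_pow 2)).sub
    (continuous_const.mul (continuous_abs.rpow_const fun x => Or.inr hlam0.le))

lemma psi_even (a b lam ξ : ℝ) : psi a b lam (-ξ) = psi a b lam ξ := by
  simp [psi, abs_neg]

lemma f_integrable {a b lam t : ℝ} (ha : 0 < a) (hb : 0 < b) (hlam0 : 0 < lam) (hlam2 : lam < 2)
    (ht : 0 < t) :
    ∃ B : ℝ, 1 ≤ B ∧ (∀ ξ : ℝ, Real.exp (-(t * psi a b lam ξ)) ≤ B) ∧
      Integrable (fun ξ : ℝ => Real.exp (-(t * psi a b lam ξ))) := by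
  obtain ⟨C, hC0, hC⟩ := psi_bound ha hb hlam0 hlam2
  have hcont : Continuous fun ξ : ℝ => Real.exp (-(t * psi a b lam ξ)) :=
    (continuous_const.mul (psi_continuous a b lam hlam0)).neg.rexp
  have hbd : ∀ ξ : ℝ, Real.exp (-(t * psi a b lam ξ)) ≤
      Real.exp (t * C) * Real.exp (-(2 * π ^ 2 * a * t) * ξ ^ 2) := by
    intro ξ
    rw [← Real.exp_add]
    apply Real.exp_le_exp.2
    have := hC ξ
    simp only [psi]
    nlinarith [sq_nonneg ξ]
  refine ⟨Real.exp (t * C), Real.one_le_exp (by positivity), fun ξ => ?_, ?_⟩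
  · calc Real.exp (-(t * psi a b lam ξ)) ≤ _ := hbd ξ
      _ ≤ Real.exp (t * C) * 1 := by
          gcongr
          refine Real.exp_le_one_iff.2 ?_
          rw [neg_mul, neg_nonpos]
          positivity
      _ = Real.exp (t * C) := mul_one _
  · refine Integrable.mono' ((integrable_exp_neg_mul_sq (by positivity :
        (0:ℝ) < 2 * π ^ 2 * a * t)).const_mul (Real.exp (t * C)))
      hcont.aestronglyMeasurable ?_
    filter_upwards with ξ
    rw [Real.norm_eq_abs, abs_of_pos (Real.exp_pos _)]
    exact hbd ξ

lemma cos_gauss_integral {e : ℝ} (he : 0 < e) (η : ℝ) :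
    ∫ x : ℝ, Real.cos (2 * π * η * x) * Real.exp (-(e * π) * x ^ 2) =
      (Real.sqrt e)⁻¹ * Real.exp (-(π / e) * η ^ 2) := by
  have hbre : (0:ℝ) < ((e * π : ℝ) : ℂ).re := by
    simpa using mul_pos he Real.pi_pos
  have hint : Integrable fun x : ℝ =>
      Complex.exp (Complex.I * (2 * π * η : ℝ) * x) * Complex.exp (-((e * π : ℝ) : ℂ) * x ^ 2) := by
    have h := integrable_cexp_quadratic hbre (Complex.I * (2 * π * η : ℝ)) 0
    apply h.congr
    filter_upwards with x
    rw [← Complex.exp_add]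
    congr 1
    ring
  have hre : ∀ x : ℝ, (Complex.exp (Complex.I * (2 * π * η : ℝ) * x) *
      Complex.exp (-((e * π : ℝ) : ℂ) * x ^ 2)).re =
      Real.cos (2 * π * η * x) * Real.exp (-(e * π) * x ^ 2) := by
    intro x
    rw [show Complex.I * (2 * π * η : ℝ) * x = ((2 * π * η * x : ℝ) : ℂ) * Complex.I by
      push_cast; ring, show -((e * π : ℝ) : ℂ) * x ^ 2 = ((-(e * π) * x ^ 2 : ℝ) : ℂ) by
      push_cast; ring]
    rw [← Complex.ofReal_exp]
    simp only [Complex.mul_re, Complex.exp_ofReal_mul_I_re, Complex.exp_ofReal_mul_I_im,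
      Complex.ofReal_re, Complex.ofReal_im, mul_zero, sub_zero]
  have heval := fourierIntegral_gaussian hbre ((2 * π * η : ℝ) : ℂ)
  have h1 : ∫ x : ℝ, Real.cos (2 * π * η * x) * Real.exp (-(e * π) * x ^ 2) =
      (((π : ℂ) / ((e * π : ℝ) : ℂ)) ^ (1 / 2 : ℂ) *
        Complex.exp (-(((2 * π * η : ℝ) : ℂ)) ^ 2 / (4 * ((e * π : ℝ) : ℂ)))).re := by
    have h0 := integral_re hint
    simp only [RCLike.re_to_complex] at h0
    rw [← heval, ← h0]
    exact integral_congr_ae (Filter.Eventually.of_forall fun x => (hre x).symm)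
  rw [h1]
  have h2 : ((π : ℂ) / ((e * π : ℝ) : ℂ)) = ((e⁻¹ : ℝ) : ℂ) := by
    push_cast
    field_simp
  have h3 : (-(((2 * π * η : ℝ) : ℂ)) ^ 2 / (4 * ((e * π : ℝ) : ℂ))) =
      ((-(π / e) * η ^ 2 : ℝ) : ℂ) := by
    have : (π : ℂ) ≠ 0 := Complex.ofReal_ne_zero.2 Real.pi_ne_zero
    push_cast
    field_simp
    ring
  rw [h2, h3, show ((1:ℂ)/2) = ((1/2 : ℝ) : ℂ) by norm_num,
    ← Complex.ofReal_cpow (by positivity), ← Complex.ofReal_exp, ← Complex.ofReal_mul,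
    Complex.ofReal_re]
  congr 1
  rw [Real.sqrt_eq_rpow, ← Real.inv_rpow he.le]

lemma K_integrand_eq (a b lam t x ξ : ℝ) :
    Complex.exp (2 * ↑π * Complex.I * ↑x * ↑ξ) * Complex.exp (-↑(t * psi a b lam ξ)) =
      Complex.exp (((2 * π * x * ξ : ℝ) : ℂ) * Complex.I) *
        ((Real.exp (-(t * psi a b lam ξ)) : ℝ) : ℂ) := by
  rw [show (2 * ↑π * Complex.I * ↑x * ↑ξ : ℂ) = ((2 * π * x * ξ : ℝ) : ℂ) * Complex.I by
    push_cast; ring, ← Complex.ofReal_neg, Complex.ofReal_exp]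

lemma K_integrable {a b lam t : ℝ} (ha : 0 < a) (hb : 0 < b) (hlam0 : 0 < lam) (hlam2 : lam < 2)
    (ht : 0 < t) (x : ℝ) :
    Integrable (fun ξ : ℝ => Complex.exp (2 * ↑π * Complex.I * ↑x * ↑ξ) *
      Complex.exp (-↑(t * psi a b lam ξ))) := by
  obtain ⟨B, hB1, hBle, hint⟩ := f_integrable ha hb hlam0 hlam2 ht
  refine hint.norm.mono' ?_ ?_
  · apply Continuous.aestronglyMeasurable
    have hψ := psi_continuous a b lam hlam0
    exact (Complex.continuous_exp.comp (continuous_const.mul Complex.continuous_ofReal)).mul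
      (Complex.continuous_exp.comp ((Complex.continuous_ofReal.comp
        (continuous_const.mul hψ)).neg))
  · filter_upwards with ξ
    rw [K_integrand_eq, norm_mul,
      Complex.norm_exp_ofReal_mul_I, one_mul, Complex.norm_real]

lemma K_re {a b lam t : ℝ} (ha : 0 < a) (hb : 0 < b) (hlam0 : 0 < lam) (hlam2 : lam < 2)
    (ht : 0 < t) (x : ℝ) :
    (K a b lam t x).re = ∫ ξ : ℝ, Real.cos (2 * π * x * ξ) * Real.exp (-(t * psi a b lam ξ)) := by
  have h0 := integral_re (K_integrable ha hb hlam0 hlam2 ht x)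
  simp only [RCLike.re_to_complex] at h0
  rw [K, ← h0]
  congr 1
  funext ξ
  rw [K_integrand_eq]
  simp only [Complex.mul_re, Complex.exp_ofReal_mul_I_re, Complex.exp_ofReal_mul_I_im,
    Complex.ofReal_re, Complex.ofReal_im, mul_zero, sub_zero]

lemma K_im {a b lam t : ℝ} (ha : 0 < a) (hb : 0 < b) (hlam0 : 0 < lam) (hlam2 : lam < 2)
    (ht : 0 < t) (x : ℝ) : (K a b lam t x).im = 0 := by
  have h0 := integral_im (K_integrable ha hb hlam0 hlam2 ht x)
  simp only [RCLike.im_to_complex] at h0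
  rw [K, ← h0]
  have heq : ∀ ξ : ℝ, (Complex.exp (2 * ↑π * Complex.I * ↑x * ↑ξ) *
      Complex.exp (-↑(t * psi a b lam ξ))).im =
      Real.sin (2 * π * x * ξ) * Real.exp (-(t * psi a b lam ξ)) := by
    intro ξ
    rw [K_integrand_eq]
    simp only [Complex.mul_im, Complex.exp_ofReal_mul_I_re, Complex.exp_ofReal_mul_I_im,
      Complex.ofReal_re, Complex.ofReal_im, mul_zero, add_zero, zero_add]
  rw [show (∫ ξ : ℝ, (Complex.exp (2 * ↑π * Complex.I * ↑x * ↑ξ) *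
      Complex.exp (-↑(t * psi a b lam ξ))).im) = ∫ ξ : ℝ,
      Real.sin (2 * π * x * ξ) * Real.exp (-(t * psi a b lam ξ)) from by
    congr 1; funext ξ; exact heq ξ]
  set g : ℝ → ℝ := fun ξ => Real.sin (2 * π * x * ξ) * Real.exp (-(t * psi a b lam ξ)) with hg
  have h2 : ∀ ξ, g (-ξ) = - g ξ := by
    intro ξ
    simp only [hg, psi_even, mul_neg, Real.sin_neg, neg_mul]
  have h3 : ∫ ξ, g ξ = - ∫ ξ, g ξ := by
    calc ∫ ξ, g ξ = ∫ ξ, g (-ξ) := (integral_neg_eq_self g volume).symm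
      _ = ∫ ξ, -(g ξ) := by simp_rw [h2]
      _ = - ∫ ξ, g ξ := integral_neg _
  linarith

lemma tendsto_J {f : ℝ → ℝ} (hfc : Continuous f) {B : ℝ} (hB : ∀ ξ, |f ξ| ≤ B) (c : ℝ) :
    Filter.Tendsto (fun ε : ℝ => ∫ u : ℝ, f (c + Real.sqrt ε * u) * Real.exp (-π * u ^ 2))
      (nhdsWithin 0 (Set.Ioi 0)) (nhds (f c)) := by
  have h1 : Filter.Tendsto (fun ε : ℝ => ∫ u : ℝ, f (c + Real.sqrt ε * u) * Real.exp (-π * u ^ 2))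
      (nhdsWithin 0 (Set.Ioi 0)) (nhds (∫ u : ℝ, f c * Real.exp (-π * u ^ 2))) := by
    apply tendsto_integral_filter_of_dominated_convergence
      (bound := fun u : ℝ => B * Real.exp (-π * u ^ 2))
    · filter_upwards with ε
      exact ((hfc.comp (continuous_const.add (continuous_const.mul continuous_id))).mul
        (by fun_prop)).aestronglyMeasurable
    · filter_upwards with ε
      filter_upwards with u
      rw [Real.norm_eq_abs, abs_mul, abs_of_pos (Real.exp_pos _)]
      exact mul_le_mul_of_nonneg_right (hB _) (Real.exp_pos _).le
    · exact (integrable_exp_neg_mul_sq Real.pi_pos).const_mul B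
    · filter_upwards with u
      have hs : Filter.Tendsto (fun ε : ℝ => Real.sqrt ε) (nhdsWithin 0 (Set.Ioi 0)) (nhds 0) := by
        simpa [Real.sqrt_zero] using
          ((Real.continuous_sqrt.tendsto 0).mono_left nhdsWithin_le_nhds)
      have harg : Filter.Tendsto (fun ε : ℝ => c + Real.sqrt ε * u)
          (nhdsWithin 0 (Set.Ioi 0)) (nhds c) := by
        have hc : Filter.Tendsto (fun _ : ℝ => c) (nhdsWithin 0 (Set.Ioi 0)) (nhds c) :=
          tendsto_const_nhds
        simpa using hc.add (hs.mul_const u)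
      exact ((hfc.tendsto c).comp harg).mul_const _
  have h2 : ∫ u : ℝ, f c * Real.exp (-π * u ^ 2) = f c := by
    rw [integral_const_mul, integral_gaussian, div_self Real.pi_ne_zero, Real.sqrt_one, mul_one]
  rwa [h2] at h1

lemma gauss_shift {ε : ℝ} (hε : 0 < ε) (f : ℝ → ℝ) (c : ℝ) :
    ∫ ξ : ℝ, f ξ * ((Real.sqrt ε)⁻¹ * Real.exp (-(π / ε) * (ξ - c) ^ 2)) =
      ∫ u : ℝ, f (c + Real.sqrt ε * u) * Real.exp (-π * u ^ 2) := by
  have hs : (0:ℝ) < Real.sqrt ε := Real.sqrt_pos.2 hε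
  have h1 := integral_add_right_eq_self (μ := volume)
    (fun ξ : ℝ => f ξ * ((Real.sqrt ε)⁻¹ * Real.exp (-(π / ε) * (ξ - c) ^ 2))) c
  rw [← h1]
  have h2 := Measure.integral_comp_mul_left
    (fun x : ℝ => f (x + c) * ((Real.sqrt ε)⁻¹ * Real.exp (-(π / ε) * x ^ 2))) (Real.sqrt ε)
  simp only [add_sub_cancel_right] at h2 ⊢
  have h3 : ∀ u : ℝ, f (Real.sqrt ε * u + c) *
      ((Real.sqrt ε)⁻¹ * Real.exp (-(π / ε) * (Real.sqrt ε * u) ^ 2)) =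
      (Real.sqrt ε)⁻¹ * (f (c + Real.sqrt ε * u) * Real.exp (-π * u ^ 2)) := by
    intro u
    rw [mul_pow, Real.sq_sqrt hε.le, show -(π / ε) * (ε * u ^ 2) = -π * u ^ 2 by
      field_simp, add_comm (Real.sqrt ε * u) c]
    ring
  simp only [h3] at h2
  rw [integral_const_mul, abs_of_pos (inv_pos.2 hs), smul_eq_mul] at h2
  have h4 := mul_left_cancel₀ (inv_ne_zero hs.ne') h2
  rw [← h4]

lemma cosE_integrable {e : ℝ} (he : 0 < e) (η : ℝ) :
    Integrable (fun x : ℝ => Real.cos (2 * π * η * x) * Real.exp (-(e * π) * x ^ 2)) := by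
  refine (integrable_exp_neg_mul_sq (by positivity : (0:ℝ) < e * π)).mono'
    ((by fun_prop : Continuous fun x : ℝ =>
      Real.cos (2 * π * η * x) * Real.exp (-(e * π) * x ^ 2)).aestronglyMeasurable) ?_
  filter_upwards with x
  rw [Real.norm_eq_abs, abs_mul, abs_of_pos (Real.exp_pos _)]
  exact mul_le_mul_of_nonneg_right
    (abs_le.2 ⟨Real.neg_one_le_cos _, Real.cos_le_one _⟩) (Real.exp_pos _).le
    |>.trans (by rw [one_mul])

lemma inner_eval {ε : ℝ} (hε : 0 < ε) (ξ₀ ξ : ℝ) :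
    ∫ x : ℝ, Real.cos (2 * π * ξ * x) *
        (Real.exp (-(ε * π) * x ^ 2) * (1 - Real.cos (2 * π * ξ₀ * x))) =
      (Real.sqrt ε)⁻¹ * Real.exp (-(π / ε) * ξ ^ 2) -
        (1 / 2) * ((Real.sqrt ε)⁻¹ * Real.exp (-(π / ε) * (ξ - ξ₀) ^ 2)) -
        (1 / 2) * ((Real.sqrt ε)⁻¹ * Real.exp (-(π / ε) * (ξ + ξ₀) ^ 2)) := by
  have hsplit : ∀ x : ℝ, Real.cos (2 * π * ξ * x) *
      (Real.exp (-(ε * π) * x ^ 2) * (1 - Real.cos (2 * π * ξ₀ * x))) =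
      Real.cos (2 * π * ξ * x) * Real.exp (-(ε * π) * x ^ 2) -
        ((1 / 2) * (Real.cos (2 * π * (ξ - ξ₀) * x) * Real.exp (-(ε * π) * x ^ 2)) +
          (1 / 2) * (Real.cos (2 * π * (ξ + ξ₀) * x) * Real.exp (-(ε * π) * x ^ 2))) := by
    intro x
    rw [show 2 * π * (ξ - ξ₀) * x = 2 * π * ξ * x - 2 * π * ξ₀ * x by ring,
      show 2 * π * (ξ + ξ₀) * x = 2 * π * ξ * x + 2 * π * ξ₀ * x by ring,
      Real.cos_sub, Real.cos_add]
    ring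
  rw [show (∫ x : ℝ, Real.cos (2 * π * ξ * x) *
      (Real.exp (-(ε * π) * x ^ 2) * (1 - Real.cos (2 * π * ξ₀ * x)))) =
      ∫ x : ℝ, Real.cos (2 * π * ξ * x) * Real.exp (-(ε * π) * x ^ 2) -
        ((1 / 2) * (Real.cos (2 * π * (ξ - ξ₀) * x) * Real.exp (-(ε * π) * x ^ 2)) +
          (1 / 2) * (Real.cos (2 * π * (ξ + ξ₀) * x) * Real.exp (-(ε * π) * x ^ 2))) from by
    congr 1; funext x; exact hsplit x]
  have hi2 : Integrable (fun x : ℝ =>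
      1 / 2 * (Real.cos (2 * π * (ξ - ξ₀) * x) * Real.exp (-(ε * π) * x ^ 2))) :=
    (cosE_integrable hε (ξ - ξ₀)).const_mul _
  have hi3 : Integrable (fun x : ℝ =>
      1 / 2 * (Real.cos (2 * π * (ξ + ξ₀) * x) * Real.exp (-(ε * π) * x ^ 2))) :=
    (cosE_integrable hε (ξ + ξ₀)).const_mul _
  have hi23 : Integrable (fun x : ℝ =>
      1 / 2 * (Real.cos (2 * π * (ξ - ξ₀) * x) * Real.exp (-(ε * π) * x ^ 2)) +
      1 / 2 * (Real.cos (2 * π * (ξ + ξ₀) * x) * Real.exp (-(ε * π) * x ^ 2))) := hi2.add hi3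
  rw [integral_sub (cosE_integrable hε ξ) hi23,
    integral_add hi2 hi3,
    integral_const_mul, integral_const_mul,
    cos_gauss_integral hε ξ, cos_gauss_integral hε (ξ - ξ₀), cos_gauss_integral hε (ξ + ξ₀)]
  ring

lemma fubini_step {f : ℝ → ℝ} (hfc : Continuous f) (hfi : Integrable f)
    {B : ℝ} (hB : ∀ ξ, |f ξ| ≤ B) {ε : ℝ} (hε : 0 < ε) (ξ₀ : ℝ) :
    ∫ x : ℝ, (∫ ξ : ℝ, Real.cos (2 * π * ξ * x) * f ξ) *
        (Real.exp (-(ε * π) * x ^ 2) * (1 - Real.cos (2 * π * ξ₀ * x))) =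
      ∫ ξ : ℝ, f ξ * ∫ x : ℝ, Real.cos (2 * π * ξ * x) *
        (Real.exp (-(ε * π) * x ^ 2) * (1 - Real.cos (2 * π * ξ₀ * x))) := by
  set h : ℝ → ℝ := fun x => Real.exp (-(ε * π) * x ^ 2) * (1 - Real.cos (2 * π * ξ₀ * x))
    with hh
  have hhc : Continuous h := by fun_prop
  have hhb : ∀ x, |h x| ≤ 2 * Real.exp (-(ε * π) * x ^ 2) := by
    intro x
    rw [hh, abs_mul, abs_of_pos (Real.exp_pos _), mul_comm]
    refine mul_le_mul_of_nonneg_right ?_ (Real.exp_pos _).le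
    rw [abs_le]
    constructor <;> nlinarith [Real.cos_le_one (2 * π * ξ₀ * x), Real.neg_one_le_cos (2 * π * ξ₀ * x)]
  have hφ : Integrable (fun p : ℝ × ℝ => Real.cos (2 * π * p.2 * p.1) * f p.2 * h p.1)
      (volume.prod volume) := by
    have hb2 : Integrable (fun x : ℝ => 2 * Real.exp (-(ε * π) * x ^ 2)) :=
      (integrable_exp_neg_mul_sq (by positivity)).const_mul 2
    refine (hb2.mul_prod hfi.abs).mono' ?_ ?_
    · exact ((by fun_prop : Continuous fun p : ℝ × ℝ => Real.cos (2 * π * p.2 * p.1)).mul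
        ((hfc.comp continuous_snd))|>.mul (hhc.comp continuous_fst)).aestronglyMeasurable
    · filter_upwards with p
      rw [Real.norm_eq_abs, abs_mul, abs_mul]
      calc |Real.cos (2 * π * p.2 * p.1)| * |f p.2| * |h p.1|
          ≤ 1 * |f p.2| * (2 * Real.exp (-(ε * π) * p.1 ^ 2)) := by
            refine mul_le_mul ?_ (hhb _) (abs_nonneg _) (by positivity)
            exact mul_le_mul_of_nonneg_right
              (abs_le.2 ⟨Real.neg_one_le_cos _, Real.cos_le_one _⟩) (abs_nonneg _)
        _ = 2 * Real.exp (-(ε * π) * p.1 ^ 2) * |f p.2| := by ring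
  have hswap := integral_integral_swap (f := fun x ξ => Real.cos (2 * π * ξ * x) * f ξ * h x) hφ
  calc ∫ x : ℝ, (∫ ξ : ℝ, Real.cos (2 * π * ξ * x) * f ξ) * h x
      = ∫ x : ℝ, ∫ ξ : ℝ, Real.cos (2 * π * ξ * x) * f ξ * h x := by
        congr 1; funext x; rw [← integral_mul_const]
    _ = ∫ ξ : ℝ, ∫ x : ℝ, Real.cos (2 * π * ξ * x) * f ξ * h x := hswap
    _ = ∫ ξ : ℝ, f ξ * ∫ x : ℝ, Real.cos (2 * π * ξ * x) * h x := by
        congr 1; funext ξ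
        rw [← integral_const_mul]
        congr 1; funext x; ring

lemma exists_re_neg {a b lam t : ℝ} (ha : 0 < a) (hb : 0 < b) (hlam0 : 0 < lam)
    (hlam2 : lam < 2) (ht : 0 < t) : ∃ x : ℝ, (K a b lam t x).re < 0 := by
  set f : ℝ → ℝ := fun ξ => Real.exp (-(t * psi a b lam ξ)) with hfdef
  obtain ⟨B, hB1, hBle, hfi⟩ := f_integrable ha hb hlam0 hlam2 ht
  have hfc : Continuous f := (continuous_const.mul (psi_continuous a b lam hlam0)).neg.rexp
  have habs : ∀ ξ, |f ξ| ≤ B := fun ξ => by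
    rw [abs_of_pos (Real.exp_pos _)]; exact hBle ξ
  have hf0 : f 0 = 1 := by
    simp [hfdef, psi, Real.zero_rpow hlam0.ne']
  have hfeven : ∀ ξ, f (-ξ) = f ξ := fun ξ => by simp [hfdef, psi_even]
  -- choice of ξ₀
  have hden : (0:ℝ) < 4 * π ^ 2 * a + b := by positivity
  set ξ₀ : ℝ := (b / (4 * π ^ 2 * a + b)) ^ (1 / (2 - lam)) with hξ₀def
  have hξ₀ : 0 < ξ₀ := Real.rpow_pos_of_pos (by positivity) _
  have h2lam : (0:ℝ) < 2 - lam := by linarith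
  have hpow : ξ₀ ^ (2 - lam) = b / (4 * π ^ 2 * a + b) := by
    rw [hξ₀def, ← Real.rpow_mul (by positivity), one_div, inv_mul_cancel₀ h2lam.ne',
      Real.rpow_one]
  have hpsineg : psi a b lam ξ₀ < 0 := by
    have hsplit : ξ₀ ^ 2 = ξ₀ ^ lam * ξ₀ ^ (2 - lam) := by
      rw [← Real.rpow_add hξ₀, show lam + (2 - lam) = 2 by ring, Real.rpow_two]
    have hlt : 4 * π ^ 2 * a * (b / (4 * π ^ 2 * a + b)) < b := by
      rw [← mul_div_assoc, div_lt_iff₀ hden]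
      nlinarith [mul_pos hb hb]
    have hplam : 0 < ξ₀ ^ lam := Real.rpow_pos_of_pos hξ₀ _
    have : psi a b lam ξ₀ = ξ₀ ^ lam * (4 * π ^ 2 * a * (b / (4 * π ^ 2 * a + b)) - b) := by
      rw [psi, abs_of_pos hξ₀, hsplit, hpow]; ring
    rw [this]
    exact mul_neg_of_pos_of_neg hplam (by linarith)
  have hfξ₀ : 1 < f ξ₀ := by
    rw [hfdef, show (1:ℝ) = Real.exp 0 from Real.exp_zero.symm]
    exact Real.exp_lt_exp.2 (by nlinarith)
  by_contra hcon
  push_neg at hcon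
  have hFnn : ∀ x : ℝ, 0 ≤ ∫ ξ : ℝ, Real.cos (2 * π * ξ * x) * f ξ := by
    intro x
    have h := hcon x
    rw [K_re ha hb hlam0 hlam2 ht x] at h
    have : (∫ ξ : ℝ, Real.cos (2 * π * ξ * x) * f ξ) =
        ∫ ξ : ℝ, Real.cos (2 * π * x * ξ) * f ξ := by
      congr 1; funext ξ; rw [show 2 * π * ξ * x = 2 * π * x * ξ by ring]
    rw [this]
    exact h
  -- the functional
  set I : ℝ → ℝ := fun ε => ∫ x : ℝ, (∫ ξ : ℝ, Real.cos (2 * π * ξ * x) * f ξ) *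
    (Real.exp (-(ε * π) * x ^ 2) * (1 - Real.cos (2 * π * ξ₀ * x))) with hIdef
  have hInn : ∀ ε : ℝ, 0 < ε → 0 ≤ I ε := by
    intro ε hε
    refine integral_nonneg fun x => ?_
    refine mul_nonneg (hFnn x) (mul_nonneg (Real.exp_pos _).le ?_)
    nlinarith [Real.cos_le_one (2 * π * ξ₀ * x)]
  have hIeq : ∀ ε : ℝ, 0 < ε → I ε =
      (∫ u : ℝ, f (0 + Real.sqrt ε * u) * Real.exp (-π * u ^ 2)) -
        1 / 2 * (∫ u : ℝ, f (ξ₀ + Real.sqrt ε * u) * Real.exp (-π * u ^ 2)) -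
        1 / 2 * (∫ u : ℝ, f (-ξ₀ + Real.sqrt ε * u) * Real.exp (-π * u ^ 2)) := by
    intro ε hε
    have hπε : (0:ℝ) < π / ε := by positivity
    have gbase : Integrable (fun ξ : ℝ => (Real.sqrt ε)⁻¹ * Real.exp (-(π / ε) * ξ ^ 2)) :=
      (integrable_exp_neg_mul_sq hπε).const_mul _
    have gshift : ∀ c : ℝ, Integrable
        (fun ξ : ℝ => f ξ * ((Real.sqrt ε)⁻¹ * Real.exp (-(π / ε) * (ξ - c) ^ 2))) := by
      intro c
      exact (gbase.comp_sub_right c).bdd_mul hfc.aestronglyMeasurable (Filter.Eventually.of_forall fun ξ => by rw [Real.norm_eq_abs]; exact habs ξ)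
    have g2 : Integrable (fun ξ : ℝ =>
        1 / 2 * (f ξ * ((Real.sqrt ε)⁻¹ * Real.exp (-(π / ε) * (ξ - ξ₀) ^ 2)))) :=
      (gshift ξ₀).const_mul _
    have g3 : Integrable (fun ξ : ℝ =>
        1 / 2 * (f ξ * ((Real.sqrt ε)⁻¹ * Real.exp (-(π / ε) * (ξ - -ξ₀) ^ 2)))) :=
      (gshift (-ξ₀)).const_mul _
    have g23 : Integrable (fun ξ : ℝ =>
        1 / 2 * (f ξ * ((Real.sqrt ε)⁻¹ * Real.exp (-(π / ε) * (ξ - ξ₀) ^ 2))) +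
        1 / 2 * (f ξ * ((Real.sqrt ε)⁻¹ * Real.exp (-(π / ε) * (ξ - -ξ₀) ^ 2)))) := g2.add g3
    simp only [hIdef]
    rw [fubini_step hfc hfi habs hε ξ₀]
    have hexp : ∀ ξ : ℝ, f ξ * ∫ x : ℝ, Real.cos (2 * π * ξ * x) *
        (Real.exp (-(ε * π) * x ^ 2) * (1 - Real.cos (2 * π * ξ₀ * x))) =
        f ξ * ((Real.sqrt ε)⁻¹ * Real.exp (-(π / ε) * (ξ - 0) ^ 2)) -
          (1 / 2 * (f ξ * ((Real.sqrt ε)⁻¹ * Real.exp (-(π / ε) * (ξ - ξ₀) ^ 2))) +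
           1 / 2 * (f ξ * ((Real.sqrt ε)⁻¹ * Real.exp (-(π / ε) * (ξ - -ξ₀) ^ 2)))) := by
      intro ξ
      rw [inner_eval hε ξ₀ ξ, sub_zero, show ξ - -ξ₀ = ξ + ξ₀ by ring]
      ring
    rw [show (∫ ξ : ℝ, f ξ * ∫ x : ℝ, Real.cos (2 * π * ξ * x) *
        (Real.exp (-(ε * π) * x ^ 2) * (1 - Real.cos (2 * π * ξ₀ * x)))) =
        ∫ ξ : ℝ, (f ξ * ((Real.sqrt ε)⁻¹ * Real.exp (-(π / ε) * (ξ - 0) ^ 2)) -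
          (1 / 2 * (f ξ * ((Real.sqrt ε)⁻¹ * Real.exp (-(π / ε) * (ξ - ξ₀) ^ 2))) +
           1 / 2 * (f ξ * ((Real.sqrt ε)⁻¹ * Real.exp (-(π / ε) * (ξ - -ξ₀) ^ 2))))) from by
      congr 1; funext ξ; exact hexp ξ]
    rw [integral_sub (gshift 0) g23, integral_add g2 g3, integral_const_mul, integral_const_mul,
      gauss_shift hε f 0, gauss_shift hε f ξ₀, gauss_shift hε f (-ξ₀)]
    ring
  have htend : Filter.Tendsto I (nhdsWithin 0 (Set.Ioi 0))
      (nhds (f 0 - 1 / 2 * f ξ₀ - 1 / 2 * f (-ξ₀))) := by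
    have h0 := tendsto_J hfc habs 0
    have h1 := (tendsto_J hfc habs ξ₀).const_mul (1 / 2 : ℝ)
    have h2 := (tendsto_J hfc habs (-ξ₀)).const_mul (1 / 2 : ℝ)
    refine Filter.Tendsto.congr' ?_ ((h0.sub h1).sub h2)
    filter_upwards [eventually_mem_nhdsWithin] with ε hε
    exact (hIeq ε hε).symm
  have hge : 0 ≤ f 0 - 1 / 2 * f ξ₀ - 1 / 2 * f (-ξ₀) := by
    refine ge_of_tendsto htend ?_
    filter_upwards [eventually_mem_nhdsWithin] with ε hε
    exact hInn ε hε
  rw [hf0, hfeven ξ₀] at hge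
  linarith

/-- The kernel has a non-zero negative part: it is not everywhere nonnegative, and
there is a point where it is negative (with respect to the order on `ℂ`; the kernel
is in fact real-valued). -/
theorem kernel_has_negative_part
    (a b lam : ℝ) (ha : 0 < a) (hb : 0 < b) (hlam : lam ∈ Set.Ioo (0 : ℝ) 2)
    (t : ℝ) (ht : 0 < t) :
    ¬ (∀ x : ℝ, 0 ≤ K a b lam t x) ∧ ∃ x : ℝ, K a b lam t x < 0 := by
  obtain ⟨hlam0, hlam2⟩ := hlam
  obtain ⟨x, hx⟩ := exists_re_neg ha hb hlam0 hlam2 ht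
  have him := K_im ha hb hlam0 hlam2 ht x
  have hKneg : K a b lam t x < 0 := by
    rw [Complex.lt_def]
    exact ⟨by simpa using hx, by simpa using him⟩
  refine ⟨fun hpos => ?_, ⟨x, hKneg⟩⟩
  have := hpos x
  rw [Complex.le_def] at this
  simp only [Complex.zero_re] at this
  linarith [this.1]
end
end

section
/- For every λ ∈ (1,2), every Schwartz function φ : ℝ → ℝ and every x ∈ ℝ, the function z ↦ (φ(x+z) − φ(x) − φ'(x)·z)/|z|^{1+λ} is integrable on ℝ, and ∫_ℝ (φ(x+z) − φ(x) − φ'(x)·z)/|z|^{1+λ} dz = (1/(λ(λ−1))) ∫_ℝ φ''(x+z)/|z|^{λ−1} dz. -/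
open MeasureTheory Real Set

noncomputable section

namespace SecondDiffAux

/-- `|u|^s` is integrable on `[-1,1]` when `s > -1`. -/
lemma abs_rpow_integrableOn_Icc {s : ℝ} (hs : -1 < s) :
    IntegrableOn (fun u : ℝ => |u| ^ s) (Icc (-1 : ℝ) 1) volume := by
  have h1 : IntegrableOn (fun u : ℝ => |u| ^ s) (Ioc (0 : ℝ) 1) volume := by
    have h := (intervalIntegral.intervalIntegrable_rpow' hs (a := 0) (b := 1))
    rw [intervalIntegrable_iff_integrableOn_Ioc_of_le (by norm_num : (0:ℝ) ≤ 1)] at h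
    exact h.congr_fun (fun u hu => by rw [abs_of_pos hu.1]) measurableSet_Ioc
  have h2 : IntegrableOn (fun u : ℝ => |u| ^ s) (Ico (-1 : ℝ) 0) volume := by
    have h1' : Integrable ((Ioc (0 : ℝ) 1).indicator fun u : ℝ => |u| ^ s) volume :=
      (integrable_indicator_iff measurableSet_Ioc).2 h1
    have h2' := h1'.comp_mul_left' (R := (-1 : ℝ)) (by norm_num)
    rw [← integrable_indicator_iff measurableSet_Ico]
    refine h2'.congr (Filter.Eventually.of_forall fun u => ?_)
    have hmem : (-1 : ℝ) * u ∈ Ioc (0 : ℝ) 1 ↔ u ∈ Ico (-1 : ℝ) 0 := by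
      simp only [Set.mem_Ioc, Set.mem_Ico]
      constructor <;> rintro ⟨ha, hb⟩ <;> constructor <;> linarith
    show (Ioc (0 : ℝ) 1).indicator (fun u : ℝ => |u| ^ s) (-1 * u)
        = (Ico (-1 : ℝ) 0).indicator (fun u : ℝ => |u| ^ s) u
    simp only [Set.indicator_apply, hmem]
    by_cases hu : u ∈ Ico (-1 : ℝ) 0
    · rw [if_pos hu, if_pos hu, abs_mul, abs_neg, abs_one, one_mul]
    · rw [if_neg hu, if_neg hu]
  have h0 : IntegrableOn (fun u : ℝ => |u| ^ s) ({0} : Set ℝ) volume := by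
    rw [IntegrableOn, Measure.restrict_eq_zero.2 (by simp)]
    exact integrable_zero_measure
  have := (h2.union h1).union h0
  refine this.mono_set ?_
  intro u hu
  rcases lt_trichotomy u 0 with h | h | h
  · exact Or.inl (Or.inl ⟨hu.1, h⟩)
  · exact Or.inr (by simp [h])
  · exact Or.inl (Or.inr ⟨h, hu.2⟩)

/-- Weighted integrability for bounded integrable continuous functions. -/
lemma weighted_integrable {s : ℝ} (hs1 : -1 < s) (hs2 : s ≤ 0) {h : ℝ → ℝ}
    (hc : Continuous h) (hint : Integrable h volume) {M : ℝ} (hM : ∀ y, |h y| ≤ M) :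
    Integrable (fun u : ℝ => h u * |u| ^ s) volume := by
  have hmeas : AEStronglyMeasurable (fun u : ℝ => h u * |u| ^ s) volume :=
    (hc.measurable.mul (measurable_abs.pow measurable_const)).aestronglyMeasurable
  rw [← integrableOn_univ]
  have hsub : (univ : Set ℝ) ⊆ Icc (-1 : ℝ) 1 ∪ (Icc (-1 : ℝ) 1)ᶜ := by
    intro u _; exact (em (u ∈ Icc (-1 : ℝ) 1)).imp id id
  refine (IntegrableOn.union ?_ ?_).mono_set hsub
  · refine Integrable.mono' ((abs_rpow_integrableOn_Icc hs1).const_mul M) hmeas.restrict ?_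
    filter_upwards with u
    rw [Real.norm_eq_abs, abs_mul, abs_of_nonneg (rpow_nonneg (abs_nonneg u) s)]
    exact mul_le_mul_of_nonneg_right (hM u) (Real.rpow_nonneg (abs_nonneg u) s)
  · refine Integrable.mono' hint.norm.integrableOn hmeas.restrict ?_
    rw [ae_restrict_iff' measurableSet_Icc.compl]
    filter_upwards with u hu
    have h1 : (1 : ℝ) ≤ |u| := by
      rw [Set.mem_compl_iff, Set.mem_Icc, not_and_or] at hu
      rcases hu with h | h
      · rw [abs_of_nonpos (by linarith [not_le.1 h])]; linarith [not_le.1 h]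
      · rw [abs_of_nonneg (by linarith [not_le.1 h])]; linarith [not_le.1 h]
    rw [Real.norm_eq_abs, abs_mul, abs_of_nonneg (rpow_nonneg (abs_nonneg u) s)]
    calc |h u| * |u| ^ s ≤ |h u| * 1 :=
          mul_le_mul_of_nonneg_left (rpow_le_one_of_one_le_of_nonpos h1 hs2) (abs_nonneg _)
      _ = ‖h u‖ := by rw [mul_one, Real.norm_eq_abs]

lemma scaling_key {s : ℝ} (h : ℝ → ℝ) {t : ℝ} (ht : 0 < t) (z : ℝ) :
    h (t * z) * |z| ^ s = t ^ (-s) * (h (t * z) * |t * z| ^ s) := by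
  rw [abs_mul, abs_of_pos ht, Real.mul_rpow ht.le (abs_nonneg z)]
  rw [Real.rpow_neg ht.le]
  have hts : t ^ s ≠ 0 := (Real.rpow_pos_of_pos ht s).ne'
  field_simp

lemma scaling_integrable {s : ℝ} {h : ℝ → ℝ}
    (hint : Integrable (fun u : ℝ => h u * |u| ^ s) volume) {t : ℝ} (ht : 0 < t) :
    Integrable (fun z : ℝ => h (t * z) * |z| ^ s) volume := by
  have := (hint.comp_mul_left' (R := t) ht.ne').const_mul (t ^ (-s))
  refine this.congr (Filter.Eventually.of_forall fun z => ?_)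
  exact (scaling_key h ht z).symm

lemma scaling_integral {s : ℝ} {h : ℝ → ℝ}
    {t : ℝ} (ht : 0 < t) :
    ∫ z : ℝ, h (t * z) * |z| ^ s = t ^ (-s - 1) * ∫ u : ℝ, h u * |u| ^ s := by
  have key : (fun z : ℝ => h (t * z) * |z| ^ s)
      = fun z : ℝ => t ^ (-s) * ((fun u => h u * |u| ^ s) (t * z)) := by
    funext z; exact scaling_key h ht z
  rw [key, MeasureTheory.integral_const_mul,
    MeasureTheory.Measure.integral_comp_mul_left (fun u => h u * |u| ^ s) t]
  rw [smul_eq_mul, abs_inv, abs_of_pos ht, ← mul_assoc]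
  congr 1
  rw [← Real.rpow_neg_one t, ← Real.rpow_add ht, sub_eq_add_neg]

/-- Second-order Taylor formula with integral remainder. -/
lemma taylor_id (φ : SchwartzMap ℝ ℝ) (x z : ℝ) :
    φ (x + z) - φ x - deriv (⇑φ) x * z
      = ∫ t in (0 : ℝ)..1, (1 - t) * deriv (deriv (⇑φ)) (x + t * z) * z ^ 2 := by
  set φ₁ := SchwartzMap.derivCLM ℝ ℝ φ with hφ₁
  set φ₂ := SchwartzMap.derivCLM ℝ ℝ φ₁ with hφ₂
  have hd1 : (deriv (⇑φ) : ℝ → ℝ) = ⇑φ₁ := funext fun y => (SchwartzMap.derivCLM_apply ℝ φ y).symm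
  have hd2 : (deriv (deriv (⇑φ)) : ℝ → ℝ) = ⇑φ₂ := by
    rw [hd1]; exact funext fun y => (SchwartzMap.derivCLM_apply ℝ φ₁ y).symm
  have hinner : ∀ t : ℝ, HasDerivAt (fun t : ℝ => x + t * z) z t := by
    intro t
    simpa using (hasDerivAt_mul_const z (x := t)).const_add x
  have hφd : ∀ y : ℝ, HasDerivAt (⇑φ) (φ₁ y) y := by
    intro y
    have := (φ.differentiable y).hasDerivAt
    rwa [show deriv (⇑φ) y = φ₁ y from congrFun hd1 y] at this
  have hφ1d : ∀ y : ℝ, HasDerivAt (⇑φ₁) (φ₂ y) y := by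
    intro y
    have := (φ₁.differentiable y).hasDerivAt
    rwa [show deriv (⇑φ₁) y = φ₂ y from SchwartzMap.derivCLM_apply ℝ φ₁ y] at this
  have hH : ∀ t : ℝ, HasDerivAt
      (fun t : ℝ => φ (x + t * z) + (1 - t) * (z * φ₁ (x + t * z)))
      ((1 - t) * φ₂ (x + t * z) * z ^ 2) t := by
    intro t
    have h1 : HasDerivAt (fun t : ℝ => φ (x + t * z)) (φ₁ (x + t * z) * z) t :=
      (hφd (x + t * z)).comp t (hinner t)
    have h2 : HasDerivAt (fun t : ℝ => φ₁ (x + t * z)) (φ₂ (x + t * z) * z) t :=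
      (hφ1d (x + t * z)).comp t (hinner t)
    have h3 : HasDerivAt (fun t : ℝ => z * φ₁ (x + t * z)) (z * (φ₂ (x + t * z) * z)) t :=
      h2.const_mul z
    have h4 : HasDerivAt (fun t : ℝ => (1 : ℝ) - t) (-1) t := by
      simpa using (hasDerivAt_id t).const_sub 1
    have h5 := h4.mul h3
    have h6 := h1.add h5
    exact h6.congr_deriv (by ring)
  have hcont : Continuous fun t : ℝ => (1 - t) * φ₂ (x + t * z) * z ^ 2 := by
    have : Continuous fun t : ℝ => x + t * z := continuous_const.add (continuous_id.mul continuous_const)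
    exact (((continuous_const.sub continuous_id).mul (φ₂.continuous.comp this)).mul
      continuous_const)
  have := intervalIntegral.integral_eq_sub_of_hasDerivAt
    (f := fun t : ℝ => φ (x + t * z) + (1 - t) * (z * φ₁ (x + t * z)))
    (fun t _ => hH t) ((hcont.intervalIntegrable 0 1))
  rw [hd2]
  rw [this]
  rw [hd1]
  simp
  ring

/-- The Beta-type integral. -/
lemma beta_calc {lam : ℝ} (h1 : 1 < lam) (h2 : lam < 2) :
    ∫ t in (0 : ℝ)..1, (1 - t) * t ^ (lam - 2) = 1 / (lam * (lam - 1)) := by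
  have hlne : lam ≠ 0 := by linarith
  have hl1ne : lam - 1 ≠ 0 := by linarith
  have hcongr : ∀ t ∈ uIcc (0 : ℝ) 1,
      (1 - t) * t ^ (lam - 2) = t ^ (lam - 2) - t ^ (lam - 1) := by
    intro t ht
    rw [uIcc_of_le (by norm_num : (0:ℝ) ≤ 1)] at ht
    rcases eq_or_lt_of_le ht.1 with h | h
    · rw [← h]
      rw [Real.zero_rpow (by linarith), Real.zero_rpow (by linarith)]
      ring
    · have : t ^ (lam - 1) = t ^ (lam - 2) * t := by
        rw [show lam - 1 = (lam - 2) + 1 by ring, Real.rpow_add_one h.ne']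
      rw [this]; ring
  rw [intervalIntegral.integral_congr hcongr]
  rw [intervalIntegral.integral_sub (intervalIntegral.intervalIntegrable_rpow' (by linarith))
    (intervalIntegral.intervalIntegrable_rpow' (by linarith))]
  rw [integral_rpow (Or.inl (by linarith)), integral_rpow (Or.inl (by linarith))]
  rw [show lam - 2 + 1 = lam - 1 by ring, show lam - 1 + 1 = lam by ring]
  rw [Real.one_rpow, Real.one_rpow, Real.zero_rpow hl1ne, Real.zero_rpow hlne]
  field_simp
  ring

end SecondDiffAux

open SecondDiffAux

/-- For `λ ∈ (1,2)` and a Schwartz function `φ`, the second-difference quotient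
`z ↦ (φ(x+z) − φ(x) − φ'(x)z)/|z|^{1+λ}` is integrable on `ℝ` and
`∫ (φ(x+z) − φ(x) − φ'(x)z)/|z|^{1+λ} dz = (1/(λ(λ−1))) ∫ φ''(x+z)/|z|^{λ−1} dz`. -/
theorem integral_second_difference_eq
    (lam : ℝ) (hlam : lam ∈ Set.Ioo (1 : ℝ) 2)
    (φ : SchwartzMap ℝ ℝ) (x : ℝ) :
    Integrable
      (fun z : ℝ => (φ (x + z) - φ x - deriv (⇑φ) x * z) / |z| ^ (1 + lam)) volume ∧
    ∫ z : ℝ, (φ (x + z) - φ x - deriv (⇑φ) x * z) / |z| ^ (1 + lam) =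
      (1 / (lam * (lam - 1))) * ∫ z : ℝ, deriv (deriv (⇑φ)) (x + z) / |z| ^ (lam - 1) := by
  obtain ⟨hl1, hl2⟩ := hlam
  set s : ℝ := 1 - lam with hs
  have hs1 : -1 < s := by rw [hs]; linarith
  have hs2 : s ≤ 0 := by rw [hs]; linarith
  set φ₁ := SchwartzMap.derivCLM ℝ ℝ φ with hφ₁
  set φ₂ := SchwartzMap.derivCLM ℝ ℝ φ₁ with hφ₂
  have hd1 : (deriv (⇑φ) : ℝ → ℝ) = ⇑φ₁ := funext fun y => (SchwartzMap.derivCLM_apply ℝ φ y).symm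
  have hd2 : (deriv (deriv (⇑φ)) : ℝ → ℝ) = ⇑φ₂ := by
    rw [hd1]; exact funext fun y => (SchwartzMap.derivCLM_apply ℝ φ₁ y).symm
  -- the shifted second derivative and its absolute value
  set h : ℝ → ℝ := fun u => φ₂ (x + u) with hh
  obtain ⟨M, hM⟩ : ∃ M : ℝ, ∀ y : ℝ, |h y| ≤ M :=
    ⟨SchwartzMap.seminorm ℝ 0 0 φ₂, fun y => SchwartzMap.norm_le_seminorm ℝ φ₂ (x + y)⟩
  have hhc : Continuous h := φ₂.continuous.comp (continuous_const.add continuous_id)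
  have hhint : Integrable h volume := φ₂.integrable.comp_add_left x
  have hW : Integrable (fun u : ℝ => h u * |u| ^ s) volume :=
    weighted_integrable hs1 hs2 hhc hhint hM
  have hWabs : Integrable (fun u : ℝ => |h u| * |u| ^ s) volume :=
    weighted_integrable hs1 hs2 hhc.abs hhint.abs (fun y => by rw [abs_abs]; exact hM y)
  set I : ℝ := ∫ u : ℝ, h u * |u| ^ s with hI
  set K : ℝ := ∫ u : ℝ, |h u| * |u| ^ s with hK
  -- the product function
  set μt : Measure ℝ := volume.restrict (Ioc (0 : ℝ) 1) with hμt
  set F : ℝ × ℝ → ℝ := fun p => (1 - p.2) * h (p.2 * p.1) * |p.1| ^ s with hF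
  have hFmeas : AEStronglyMeasurable F (volume.prod μt) := by
    apply Measurable.aestronglyMeasurable
    exact ((measurable_const.sub measurable_snd).mul
        (hhc.measurable.comp (measurable_snd.mul measurable_fst))).mul
      (measurable_fst.abs.pow measurable_const)
  have hFint : Integrable F (volume.prod μt) := by
    rw [MeasureTheory.integrable_prod_iff' hFmeas]
    constructor
    · rw [hμt, ae_restrict_iff' measurableSet_Ioc]
      filter_upwards with t ht
      have := (scaling_integrable hW ht.1).const_mul (1 - t)
      refine this.congr (Filter.Eventually.of_forall fun z => ?_)
      simp only [hF]
      ring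
    · have heq : ∀ t ∈ Ioc (0:ℝ) 1,
          (∫ z : ℝ, ‖F (z, t)‖) = (1 - t) * t ^ (lam - 2) * K := by
        intro t ht
        have hnorm : ∀ z : ℝ, ‖F (z, t)‖ = (1 - t) * (|h (t * z)| * |z| ^ s) := by
          intro z
          simp only [hF, Real.norm_eq_abs, abs_mul]
          rw [abs_of_nonneg (by linarith [ht.2] : (0:ℝ) ≤ 1 - t),
            abs_of_nonneg (rpow_nonneg (abs_nonneg z) s)]
          ring
        simp_rw [hnorm]
        rw [MeasureTheory.integral_const_mul,
          scaling_integral (h := fun u => |h u|) ht.1]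
        rw [show -s - 1 = lam - 2 by rw [hs]; ring, ← hK]
        ring
      have hint2 : IntegrableOn (fun t : ℝ => (1 - t) * t ^ (lam - 2) * K)
          (Ioc (0:ℝ) 1) volume := by
        have h1 : IntervalIntegrable (fun t : ℝ => (1 - t) * t ^ (lam - 2) * K)
            volume 0 1 := by
          apply IntervalIntegrable.mul_const
          exact (intervalIntegral.intervalIntegrable_rpow' (by linarith)).continuousOn_mul
            ((continuous_const.sub continuous_id).continuousOn)
        rwa [intervalIntegrable_iff_integrableOn_Ioc_of_le (by norm_num : (0:ℝ) ≤ 1)] at h1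
      refine (hint2.congr_fun (fun t ht => (heq t ht).symm) measurableSet_Ioc)
  -- pointwise identity for the LHS integrand
  have hpt : ∀ z : ℝ, (φ (x + z) - φ x - deriv (⇑φ) x * z) / |z| ^ (1 + lam)
      = ∫ t, F (z, t) ∂μt := by
    intro z
    have hrhs : (∫ t, F (z, t) ∂μt)
        = ∫ t in (0:ℝ)..1, (1 - t) * h (t * z) * |z| ^ s := by
      rw [hμt, intervalIntegral.integral_of_le (by norm_num : (0:ℝ) ≤ 1)]
    rcases eq_or_ne z 0 with rfl | hz
    · rw [hrhs]
      have hsne : s ≠ 0 := by rw [hs]; intro hc; linarith [hc]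
      simp [Real.zero_rpow hsne]
    · rw [hrhs, taylor_id φ x z, ← intervalIntegral.integral_div]
      apply intervalIntegral.integral_congr
      intro t _
      show (1 - t) * deriv (deriv ⇑φ) (x + t * z) * z ^ 2 / |z| ^ (1 + lam)
          = (1 - t) * h (t * z) * |z| ^ s
      have habs : (0:ℝ) < |z| := abs_pos.2 hz
      have hpow : z ^ 2 / |z| ^ (1 + lam) = |z| ^ s := by
        rw [← sq_abs, show |z| ^ 2 = |z| ^ ((2:ℕ):ℝ) from (Real.rpow_natCast _ 2).symm,
          ← Real.rpow_sub habs]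
        norm_num
        rw [hs, show (2:ℝ) - (1 + lam) = 1 - lam by ring]
      rw [mul_div_assoc, hpow, hd2]
  constructor
  · have := hFint.integral_prod_left
    refine this.congr (Filter.Eventually.of_forall fun z => (hpt z).symm)
  · have hswap : ∫ z : ℝ, ∫ t, F (z, t) ∂μt = ∫ t, (∫ z : ℝ, F (z, t)) ∂μt :=
      MeasureTheory.integral_integral_swap (f := fun z t => F (z, t)) hFint
    have hinner : ∀ t ∈ Ioc (0:ℝ) 1, (∫ z : ℝ, F (z, t)) = (1 - t) * t ^ (lam - 2) * I := by
      intro t ht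
      have : (fun z : ℝ => F (z, t)) = fun z : ℝ => (1 - t) * (h (t * z) * |z| ^ s) := by
        funext z; simp only [hF]; ring
      rw [this, MeasureTheory.integral_const_mul, scaling_integral (h := h) ht.1,
        show -s - 1 = lam - 2 by rw [hs]; ring, ← hI]
      ring
    have hIlast : I = ∫ z : ℝ, deriv (deriv (⇑φ)) (x + z) / |z| ^ (lam - 1) := by
      rw [hI, hd2]
      apply integral_congr_ae
      filter_upwards with u
      rcases eq_or_ne u 0 with rfl | hu
      · simp only [hh]
        rw [abs_zero, Real.zero_rpow (by linarith : s ≠ 0),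
          Real.zero_rpow (by linarith : lam - 1 ≠ 0)]
        simp
      · simp only [hh]
        rw [show s = -(lam - 1) by rw [hs]; ring, Real.rpow_neg (abs_nonneg u),
          div_eq_mul_inv]
    calc ∫ z : ℝ, (φ (x + z) - φ x - deriv (⇑φ) x * z) / |z| ^ (1 + lam)
        = ∫ z : ℝ, ∫ t, F (z, t) ∂μt := by
          apply integral_congr_ae
          filter_upwards with z
          exact hpt z
      _ = ∫ t, (∫ z : ℝ, F (z, t)) ∂μt := hswap
      _ = ∫ t in Ioc (0:ℝ) 1, (1 - t) * t ^ (lam - 2) * I := by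
          rw [hμt]
          apply setIntegral_congr_fun measurableSet_Ioc
          intro t ht
          exact hinner t ht
      _ = (∫ t in (0:ℝ)..1, (1 - t) * t ^ (lam - 2)) * I := by
          rw [intervalIntegral.integral_of_le (by norm_num : (0:ℝ) ≤ 1),
            ← integral_mul_const]
      _ = (1 / (lam * (lam - 1))) * ∫ z : ℝ, deriv (deriv (⇑φ)) (x + z) / |z| ^ (lam - 1) := by
          rw [beta_calc hl1 hl2, hIlast]
end
end

section
/- The function r : (0,2) → ℝ defined by r(λ) = (2/λ)^{1/(2−λ)} is strictly decreasing on (0,2); moreover r(λ) → +∞ as λ → 0⁺ and r(λ) → √e as λ → 2⁻. -/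
open MeasureTheory Real Filter

noncomputable section

/-- Auxiliary exponent function. -/
private def gAux (x : ℝ) : ℝ := (Real.log 2 - Real.log x) * (2 - x)⁻¹

private lemma gAux_hasDeriv {x : ℝ} (hx : x ∈ Set.Ioo (0 : ℝ) 2) :
    HasDerivAt gAux ((-x⁻¹) * (2 - x)⁻¹ + (Real.log 2 - Real.log x) * ((2 - x)⁻¹ ^ 2)) x := by
  obtain ⟨hx0, hx2⟩ := hx
  have h2x : (2 : ℝ) - x ≠ 0 := by linarith
  have h1 : HasDerivAt (fun y : ℝ => Real.log 2 - Real.log y) (-x⁻¹) x := by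
    simpa using (Real.hasDerivAt_log (ne_of_gt hx0)).const_sub (Real.log 2)
  have h2 : HasDerivAt (fun y : ℝ => (2 - y)) (-1 : ℝ) x := by
    simpa using (hasDerivAt_id x).const_sub 2
  have h3 : HasDerivAt (fun y : ℝ => (2 - y)⁻¹) ((2 - x)⁻¹ ^ 2) x := by
    have : HasDerivAt (fun y : ℝ => (2 - y)⁻¹) (-(-1) / (2 - x) ^ 2) x := h2.inv h2x
    convert this using 1
    field_simp
  exact h1.mul h3

private lemma gAux_deriv_neg {x : ℝ} (hx : x ∈ Set.Ioo (0 : ℝ) 2) :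
    deriv gAux x < 0 := by
  obtain ⟨hx0, hx2⟩ := hx
  have h2x : (0 : ℝ) < 2 - x := by linarith
  rw [(gAux_hasDeriv ⟨hx0, hx2⟩).deriv]
  have hlog : Real.log 2 - Real.log x < (2 - x) / x := by
    have h := Real.log_lt_sub_one_of_pos (x := 2 / x) (by positivity)
      (by
        intro h
        have : x = 2 := by
          field_simp at h
          linarith
        linarith)
    rw [Real.log_div (by norm_num) (ne_of_gt hx0)] at h
    have : 2 / x - 1 = (2 - x) / x := by field_simp
    linarith
  have hkey : ((2 - x) / x) * ((2 - x)⁻¹ ^ 2) = x⁻¹ * (2 - x)⁻¹ := by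
    field_simp
  have hpos : (0 : ℝ) < (2 - x)⁻¹ ^ 2 := by positivity
  have := mul_lt_mul_of_pos_right hlog hpos
  rw [hkey] at this
  linarith

private lemma gAux_strictAnti : StrictAntiOn gAux (Set.Ioo (0 : ℝ) 2) := by
  apply strictAntiOn_of_deriv_neg (convex_Ioo 0 2)
  · intro x hx
    exact ((gAux_hasDeriv hx).differentiableAt.continuousAt).continuousWithinAt
  · intro x hx
    rw [interior_Ioo] at hx
    exact gAux_deriv_neg hx

private lemma rpow_eq_exp_gAux {x : ℝ} (hx0 : 0 < x) :
    (2 / x) ^ (1 / (2 - x)) = Real.exp (gAux x) := by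
  rw [Real.rpow_def_of_pos (by positivity), gAux,
    Real.log_div (by norm_num) (ne_of_gt hx0), one_div]

/-- The ratio `r(λ) = (2/λ)^{1/(2−λ)}` of the neutral to the maximizing frequency
is strictly decreasing on `(0,2)`, tends to `+∞` as `λ → 0⁺` and tends to `√e`
as `λ → 2⁻`. -/
theorem ratio_strictAnti_and_limits :
    StrictAntiOn (fun lam : ℝ => (2 / lam) ^ (1 / (2 - lam))) (Set.Ioo (0 : ℝ) 2) ∧
    Tendsto (fun lam : ℝ => (2 / lam) ^ (1 / (2 - lam)))
      (nhdsWithin 0 (Set.Ioi 0)) atTop ∧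
    Tendsto (fun lam : ℝ => (2 / lam) ^ (1 / (2 - lam)))
      (nhdsWithin 2 (Set.Iio 2)) (nhds (Real.sqrt (Real.exp 1))) := by
  refine ⟨?_, ?_, ?_⟩
  · -- strict antitonicity
    intro a ha b hb hab
    simp only
    rw [rpow_eq_exp_gAux ha.1, rpow_eq_exp_gAux hb.1]
    exact Real.exp_lt_exp.2 (gAux_strictAnti ha hb hab)
  · -- limit at 0⁺
    have hG : Tendsto gAux (nhdsWithin 0 (Set.Ioi 0)) atTop := by
      have h1 : Tendsto (fun x : ℝ => Real.log 2 - Real.log x)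
          (nhdsWithin 0 (Set.Ioi 0)) atTop := by
        have hneg : Tendsto (fun x : ℝ => -Real.log x) (nhdsWithin 0 (Set.Ioi 0)) atTop :=
          tendsto_neg_atBot_atTop.comp Real.tendsto_log_nhdsGT_zero
        have := tendsto_atTop_add_const_left _ (Real.log 2) hneg
        simpa [sub_eq_add_neg] using this
      have h2 : Tendsto (fun x : ℝ => (2 - x)⁻¹)
          (nhdsWithin 0 (Set.Ioi 0)) (nhds ((2 : ℝ)⁻¹)) := by
        apply Tendsto.mono_left _ nhdsWithin_le_nhds
        have h : Tendsto (fun x : ℝ => (2 - x)) (nhds 0) (nhds 2) := by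
          have h' : Continuous (fun x : ℝ => (2 : ℝ) - x) := continuous_const.sub continuous_id
          simpa using h'.tendsto (0 : ℝ)
        exact (h.inv₀ (by norm_num))
      exact h1.atTop_mul_pos (by norm_num) h2
    have := (Real.tendsto_exp_atTop).comp hG
    apply this.congr'
    filter_upwards [self_mem_nhdsWithin] with x hx
    exact (rpow_eq_exp_gAux hx).symm
  · -- limit at 2⁻
    have hmem : Set.Ioo (0 : ℝ) 2 ∈ nhdsWithin 2 (Set.Iio 2) :=
      Ioo_mem_nhdsLT_of_mem (by constructor <;> norm_num)
    have hslope : Tendsto (slope Real.log 2) (nhdsWithin 2 ({2}ᶜ)) (nhds (2 : ℝ)⁻¹) :=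
      hasDerivAt_iff_tendsto_slope.1 (Real.hasDerivAt_log (by norm_num))
    have hG : Tendsto gAux (nhdsWithin 2 (Set.Iio 2)) (nhds (2 : ℝ)⁻¹) := by
      have hle : nhdsWithin (2 : ℝ) (Set.Iio 2) ≤ nhdsWithin 2 ({2}ᶜ) :=
        nhdsWithin_mono 2 (fun x hx => ne_of_lt hx)
      apply (hslope.mono_left hle).congr'
      filter_upwards [hmem] with x hx
      obtain ⟨hx0, hx2⟩ := hx
      rw [slope_def_field, gAux]
      rw [div_eq_iff (by intro h; apply (ne_of_lt hx2); linarith)]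
      have h2x : (2 : ℝ) - x ≠ 0 := by linarith
      field_simp
      ring
    have hexp : Tendsto (fun x => Real.exp (gAux x)) (nhdsWithin 2 (Set.Iio 2))
        (nhds (Real.exp (2 : ℝ)⁻¹)) := (Real.continuous_exp.tendsto _).comp hG
    have heq : Real.exp ((2 : ℝ)⁻¹) = Real.sqrt (Real.exp 1) := by
      rw [← Real.exp_half]; norm_num
    rw [← heq]
    apply hexp.congr'
    filter_upwards [hmem] with x hx
    exact (rpow_eq_exp_gAux hx.1).symm
end
end
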